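/- arXiv:1107.4183 — 9 statements merged into one kernel-verified Lean document; each statement's English description precedes it below -/
import Mathlib

section
/- Let N ≥ 1. In Cl(N) ⊗ Cl(N), for every 1 ≤ m ≤ N one has C̃_1 · C̃_m = C̃_{m+1} + m(N+1−m) · C̃_{m−1} (with C̃_{N+1} = 0). (Equation (4) in the proof of Proposition 1.4.) -/
noncomputable section

open scoped TensorProduct

/-- The quadratic form `Q(x) = x_1^2 + ⋯ + x_M^2` on `ℂ^M`. -/
def Qform (M : ℕ) : QuadraticForm ℂ (Fin M → ℂ) :=
  QuadraticMap.weightedSumSquares ℂ (fun _ : Fin M => (1 : ℂ))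

/-- The Clifford algebra `Cl(M)`. -/
abbrev Cl (M : ℕ) := CliffordAlgebra (Qform M)

/-- The generator `e_i` for `i : Fin M`. -/
def gen (M : ℕ) (i : Fin M) : Cl M :=
  CliffordAlgebra.ι (Qform M) (Pi.single i 1)

/-- The ordered product `e_{i_1} ⋯ e_{i_m}` over a subset `s = {i_1 < ⋯ < i_m}`. -/
def prodGen (M : ℕ) (s : Finset (Fin M)) : Cl M :=
  ((s.sort (· ≤ ·)).map (gen M)).prod

/-- `C̃_m = m!·∑_{i_1 < ⋯ < i_m} (e_{i_1}⋯e_{i_m}) ⊗ (e_{i_1}⋯e_{i_m})`; in particular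
`C̃_0 = 1`, `C̃_1 = ∑ e_i ⊗ e_i`, and `C̃_m = 0` for `m > N`. -/
def Ct (N : ℕ) (m : ℕ) : Cl N ⊗[ℂ] Cl N :=
  (m.factorial : ℂ) • ∑ s ∈ Finset.powersetCard m (Finset.univ : Finset (Fin N)),
    prodGen N s ⊗ₜ[ℂ] prodGen N s

lemma gen_sq (M : ℕ) (i : Fin M) : gen M i * gen M i = 1 := by
  rw [gen, CliffordAlgebra.ι_sq_scalar]
  have : Qform M (Pi.single i 1) = 1 := by
    simp [Qform, QuadraticMap.weightedSumSquares_apply, Pi.single_apply]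
  rw [this, map_one]

lemma gen_anticomm (M : ℕ) {i j : Fin M} (h : i ≠ j) :
    gen M i * gen M j = - (gen M j * gen M i) := by
  have key := CliffordAlgebra.ι_mul_ι_add_swap (Q := Qform M) (Pi.single i 1) (Pi.single j 1)
  have hp : QuadraticMap.polar (⇑(Qform M)) (Pi.single i 1) (Pi.single j 1) = 0 := by
    simp only [QuadraticMap.polar, Qform, QuadraticMap.weightedSumSquares_apply, Pi.add_apply,
      Pi.single_apply, smul_eq_mul, one_mul]
    have h1 : ∀ x : Fin M,
        ((if x = i then (1:ℂ) else 0) + if x = j then 1 else 0) *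
          ((if x = i then (1:ℂ) else 0) + if x = j then 1 else 0)
        = (if x = i then (1:ℂ) else 0) + (if x = j then 1 else 0) := by
      intro x
      by_cases hx : x = i <;> by_cases hy : x = j <;> simp_all
    rw [Finset.sum_congr rfl (fun x _ => h1 x), Finset.sum_add_distrib]
    simp
  rw [hp, map_zero] at key
  rw [gen, gen] at *
  exact eq_neg_of_add_eq_zero_left key

lemma perm_eps (M : ℕ) : ∀ {l₁ l₂ : List (Fin M)}, l₁.Perm l₂ → l₁.Nodup →
    ∃ ε : ℂ, ε * ε = 1 ∧ (l₁.map (gen M)).prod = ε • (l₂.map (gen M)).prod := by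
  intro l₁ l₂ hp
  induction hp with
  | nil => exact fun _ => ⟨1, by norm_num⟩
  | cons x p ih =>
      intro hnd
      obtain ⟨ε, hε, heq⟩ := ih hnd.of_cons
      exact ⟨ε, hε, by simp [heq, mul_smul_comm]⟩
  | swap x y l =>
      intro hnd
      have hxy : y ≠ x := by simp at hnd; tauto
      refine ⟨-1, by norm_num, ?_⟩
      simp only [List.map_cons, List.prod_cons, ← mul_assoc, gen_anticomm M hxy]
      simp
  | trans p₁ p₂ ih₁ ih₂ =>
      intro hnd
      obtain ⟨ε₁, hε₁, h₁⟩ := ih₁ hnd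
      obtain ⟨ε₂, hε₂, h₂⟩ := ih₂ (p₁.nodup_iff.mp hnd)
      exact ⟨ε₁ * ε₂, by rw [mul_mul_mul_comm, hε₁, hε₂, one_mul],
        by rw [h₁, h₂, smul_smul]⟩

lemma mul_prodGen_not_mem (M : ℕ) {i : Fin M} {s : Finset (Fin M)} (h : i ∉ s) :
    ∃ ε : ℂ, ε * ε = 1 ∧ gen M i * prodGen M s = ε • prodGen M (insert i s) := by
  have hperm : (i :: s.sort (· ≤ ·)).Perm ((insert i s).sort (· ≤ ·)) := by
    refine ((Finset.sort_perm_toList s _).cons i).trans ?_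
    exact ((Finset.toList_insert h).symm).trans (Finset.sort_perm_toList _ _).symm
  have hnd : (i :: s.sort (· ≤ ·)).Nodup := by
    refine List.nodup_cons.mpr ⟨by simpa using h, s.sort_nodup _⟩
  obtain ⟨ε, hε, heq⟩ := perm_eps M hperm hnd
  exact ⟨ε, hε, by simpa [prodGen] using heq⟩

lemma mul_prodGen_mem (M : ℕ) {i : Fin M} {s : Finset (Fin M)} (h : i ∈ s) :
    ∃ ε : ℂ, ε * ε = 1 ∧ gen M i * prodGen M s = ε • prodGen M (s.erase i) := by
  have hie : i ∉ s.erase i := Finset.notMem_erase i s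
  have hperm : (s.sort (· ≤ ·)).Perm (i :: (s.erase i).sort (· ≤ ·)) := by
    refine (Finset.sort_perm_toList s _).trans ?_
    have p2 : (insert i (s.erase i)).toList.Perm (i :: (s.erase i).toList) :=
      Finset.toList_insert hie
    rw [Finset.insert_erase h] at p2
    exact p2.trans (((Finset.sort_perm_toList (s.erase i) _).symm).cons i)
  obtain ⟨ε, hε, heq⟩ := perm_eps M hperm (s.sort_nodup _)
  refine ⟨ε, hε, ?_⟩
  rw [prodGen, heq]
  simp only [List.map_cons, List.prod_cons, mul_smul_comm, ← mul_assoc, gen_sq, one_mul]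
  rfl

lemma eps_tmul {A : Type*} [Ring A] [Algebra ℂ A] {ε : ℂ} (hε : ε * ε = 1) (x : A) :
    (ε • x) ⊗ₜ[ℂ] (ε • x) = x ⊗ₜ[ℂ] x := by
  rw [TensorProduct.tmul_smul, TensorProduct.smul_tmul', smul_smul, hε, one_smul]

lemma tmul_not_mem (M : ℕ) {i : Fin M} {s : Finset (Fin M)} (h : i ∉ s) :
    (gen M i * prodGen M s) ⊗ₜ[ℂ] (gen M i * prodGen M s) =
      prodGen M (insert i s) ⊗ₜ[ℂ] prodGen M (insert i s) := by
  obtain ⟨ε, hε, heq⟩ := mul_prodGen_not_mem M h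
  rw [heq, eps_tmul hε]

lemma tmul_mem (M : ℕ) {i : Fin M} {s : Finset (Fin M)} (h : i ∈ s) :
    (gen M i * prodGen M s) ⊗ₜ[ℂ] (gen M i * prodGen M s) =
      prodGen M (s.erase i) ⊗ₜ[ℂ] prodGen M (s.erase i) := by
  obtain ⟨ε, hε, heq⟩ := mul_prodGen_mem M h
  rw [heq, eps_tmul hε]

lemma prodGen_singleton (M : ℕ) (i : Fin M) : prodGen M {i} = gen M i := by
  simp [prodGen, Finset.sort_singleton]

lemma Ct_one (N : ℕ) : Ct N 1 = ∑ i : Fin N, gen N i ⊗ₜ[ℂ] gen N i := by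
  rw [Ct, Finset.powersetCard_one, Finset.sum_map]
  simp [prodGen_singleton, Nat.factorial]

/-- Equation (4): `C̃_1 C̃_m = C̃_{m+1} + m(N+1−m) C̃_{m−1}` for `1 ≤ m ≤ N`. -/
theorem Ct_recursion (N : ℕ) (hN : 1 ≤ N) (m : ℕ) (hm1 : 1 ≤ m) (hmN : m ≤ N) :
    Ct N 1 * Ct N m = Ct N (m + 1) + ((m * (N + 1 - m) : ℕ) : ℂ) • Ct N (m - 1) := by
  classical
  set F : Finset (Fin N) → Cl N ⊗[ℂ] Cl N := fun T => prodGen N T ⊗ₜ[ℂ] prodGen N T with hF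
  have step1 : Ct N 1 * Ct N m = (m.factorial : ℂ) •
      ∑ i : Fin N, ∑ s ∈ Finset.powersetCard m (Finset.univ : Finset (Fin N)),
        (gen N i * prodGen N s) ⊗ₜ[ℂ] (gen N i * prodGen N s) := by
    rw [Ct_one, Ct, mul_smul_comm, Finset.sum_mul_sum]
    congr 1
    refine Finset.sum_congr rfl fun i _ => Finset.sum_congr rfl fun s _ => ?_
    rw [Algebra.TensorProduct.tmul_mul_tmul]
  -- split each inner sum
  have step2 : ∀ i : Fin N,
      ∑ s ∈ Finset.powersetCard m (Finset.univ : Finset (Fin N)),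
        (gen N i * prodGen N s) ⊗ₜ[ℂ] (gen N i * prodGen N s)
      = (∑ s ∈ (Finset.powersetCard m (Finset.univ : Finset (Fin N))).filter (fun s => i ∈ s),
          F (s.erase i))
        + ∑ s ∈ (Finset.powersetCard m (Finset.univ : Finset (Fin N))).filter (fun s => i ∉ s),
          F (insert i s) := by
    intro i
    rw [← Finset.sum_filter_add_sum_filter_not
      (Finset.powersetCard m (Finset.univ : Finset (Fin N))) (fun s => i ∈ s)]
    congr 1
    · exact Finset.sum_congr rfl fun s hs => tmul_mem N (Finset.mem_filter.mp hs).2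
    · exact Finset.sum_congr rfl fun s hs => tmul_not_mem N (Finset.mem_filter.mp hs).2
  -- reindex: erase part
  have reA : ∀ i : Fin N,
      ∑ s ∈ (Finset.powersetCard m (Finset.univ : Finset (Fin N))).filter (fun s => i ∈ s),
        F (s.erase i)
      = ∑ T ∈ (Finset.powersetCard (m-1) (Finset.univ : Finset (Fin N))).filter (fun T => i ∉ T),
        F T := by
    intro i
    refine Finset.sum_nbij' (fun s => s.erase i) (fun T => insert i T) ?_ ?_ ?_ ?_ ?_
    · intro s hs
      obtain ⟨hs1, hs2⟩ := Finset.mem_filter.mp hs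
      rw [Finset.mem_powersetCard_univ] at hs1
      refine Finset.mem_filter.mpr ⟨?_, Finset.notMem_erase i s⟩
      rw [Finset.mem_powersetCard_univ, Finset.card_erase_of_mem hs2, hs1]
    · intro T hT
      obtain ⟨hT1, hT2⟩ := Finset.mem_filter.mp hT
      rw [Finset.mem_powersetCard_univ] at hT1
      refine Finset.mem_filter.mpr ⟨?_, Finset.mem_insert_self i T⟩
      rw [Finset.mem_powersetCard_univ, Finset.card_insert_of_notMem hT2, hT1]
      omega
    · intro s hs
      exact Finset.insert_erase (Finset.mem_filter.mp hs).2
    · intro T hT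
      exact Finset.erase_insert (Finset.mem_filter.mp hT).2
    · intro s hs; rfl
  -- reindex: insert part
  have reB : ∀ i : Fin N,
      ∑ s ∈ (Finset.powersetCard m (Finset.univ : Finset (Fin N))).filter (fun s => i ∉ s),
        F (insert i s)
      = ∑ T ∈ (Finset.powersetCard (m+1) (Finset.univ : Finset (Fin N))).filter (fun T => i ∈ T),
        F T := by
    intro i
    refine Finset.sum_nbij' (fun s => insert i s) (fun T => T.erase i) ?_ ?_ ?_ ?_ ?_
    · intro s hs
      obtain ⟨hs1, hs2⟩ := Finset.mem_filter.mp hs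
      rw [Finset.mem_powersetCard_univ] at hs1
      refine Finset.mem_filter.mpr ⟨?_, Finset.mem_insert_self i s⟩
      rw [Finset.mem_powersetCard_univ, Finset.card_insert_of_notMem hs2, hs1]
    · intro T hT
      obtain ⟨hT1, hT2⟩ := Finset.mem_filter.mp hT
      rw [Finset.mem_powersetCard_univ] at hT1
      refine Finset.mem_filter.mpr ⟨?_, Finset.notMem_erase i T⟩
      rw [Finset.mem_powersetCard_univ, Finset.card_erase_of_mem hT2, hT1]
      omega
    · intro s hs
      exact Finset.erase_insert (Finset.mem_filter.mp hs).2
    · intro T hT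
      exact Finset.insert_erase (Finset.mem_filter.mp hT).2
    · intro s hs; rfl
  -- double sum counts
  have countA :
      ∑ i : Fin N, ∑ T ∈ (Finset.powersetCard (m-1)
          (Finset.univ : Finset (Fin N))).filter (fun T => i ∉ T), F T
      = ∑ T ∈ Finset.powersetCard (m-1) (Finset.univ : Finset (Fin N)),
          (N - (m-1)) • F T := by
    have : ∀ i : Fin N, ∑ T ∈ (Finset.powersetCard (m-1)
          (Finset.univ : Finset (Fin N))).filter (fun T => i ∉ T), F T
        = ∑ T ∈ Finset.powersetCard (m-1) (Finset.univ : Finset (Fin N)),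
            if i ∉ T then F T else 0 := fun i => Finset.sum_filter _ _
    rw [Finset.sum_congr rfl fun i _ => this i, Finset.sum_comm]
    refine Finset.sum_congr rfl fun T hT => ?_
    rw [Finset.mem_powersetCard_univ] at hT
    rw [← Finset.sum_filter]
    have hfc : (Finset.univ.filter (fun i => i ∉ T)) = Tᶜ := by ext x; simp
    rw [hfc, Finset.sum_const, Finset.card_compl, hT]
    simp
  have countB :
      ∑ i : Fin N, ∑ T ∈ (Finset.powersetCard (m+1)
          (Finset.univ : Finset (Fin N))).filter (fun T => i ∈ T), F T
      = ∑ T ∈ Finset.powersetCard (m+1) (Finset.univ : Finset (Fin N)),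
          (m + 1) • F T := by
    have : ∀ i : Fin N, ∑ T ∈ (Finset.powersetCard (m+1)
          (Finset.univ : Finset (Fin N))).filter (fun T => i ∈ T), F T
        = ∑ T ∈ Finset.powersetCard (m+1) (Finset.univ : Finset (Fin N)),
            if i ∈ T then F T else 0 := fun i => Finset.sum_filter _ _
    rw [Finset.sum_congr rfl fun i _ => this i, Finset.sum_comm]
    refine Finset.sum_congr rfl fun T hT => ?_
    rw [Finset.mem_powersetCard_univ] at hT
    rw [← Finset.sum_filter]
    have hfc : (Finset.univ.filter (fun i => i ∈ T)) = T := by ext x; simp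
    rw [hfc, Finset.sum_const, hT]
  -- put together
  rw [step1, Finset.sum_congr rfl fun i _ => step2 i, Finset.sum_add_distrib,
    Finset.sum_congr rfl fun i _ => reA i, Finset.sum_congr rfl fun i _ => reB i,
    countA, countB]
  rw [← Finset.smul_sum, ← Finset.smul_sum, Ct, Ct]
  rw [smul_add, add_comm]
  congr 1
  · rw [← Nat.cast_smul_eq_nsmul ℂ (m+1), smul_smul, ← Nat.cast_mul]
    have h : m.factorial * (m+1) = (m+1).factorial := by
      rw [Nat.factorial_succ]; ring
    rw [h]
  · rw [← Nat.cast_smul_eq_nsmul ℂ (N - (m-1)), smul_smul, smul_smul, ← Nat.cast_mul,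
      ← Nat.cast_mul]
    have h : m.factorial * (N - (m-1)) = m * (N + 1 - m) * (m-1).factorial := by
      have h1 : N - (m-1) = N + 1 - m := by omega
      have h2 : m.factorial = m * (m-1).factorial := (Nat.mul_factorial_pred (by omega)).symm
      rw [h1, h2]; ring
    rw [h]
end
end

section
/- Let N ≥ 1. The N+1 elements 1, C̃_1, C̃_1², …, C̃_1^N are linearly independent over ℂ in Cl(N) ⊗ Cl(N). (Hence, together with the identity P_{N+1}(N, C̃_1) = 0, the polynomial P_{N+1}(N, x) is the minimal polynomial of C̃_1; proof of Proposition 1.4.) -/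
noncomputable section

open scoped TensorProduct

/-- `C̃_1 = ∑_{i=1}^N e_i ⊗ e_i ∈ Cl(N) ⊗ Cl(N)`. -/
def Ct1 (N : ℕ) : Cl N ⊗[ℂ] Cl N :=
  ∑ i : Fin N, gen N i ⊗ₜ[ℂ] gen N i

namespace Prop14

lemma Qform_apply {M : ℕ} (x : Fin M → ℂ) : Qform M x = ∑ i, x i * x i := by
  simp [Qform]

lemma Qform_single {M : ℕ} (i : Fin M) : Qform M (Pi.single i 1) = 1 := by
  rw [Qform_apply]
  rw [Finset.sum_eq_single i]
  · simp
  · intro j _ hj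
    simp [Pi.single_apply, hj]
  · simp

lemma Qform_isOrtho {M : ℕ} {i j : Fin M} (h : i ≠ j) :
    (Qform M).IsOrtho (Pi.single i 1) (Pi.single j 1) := by
  rw [QuadraticMap.isOrtho_def]
  rw [Qform_apply, Qform_single, Qform_single]
  have : ∀ l, ((Pi.single i 1 + Pi.single j 1 : Fin M → ℂ)) l * ((Pi.single i 1 + Pi.single j 1 : Fin M → ℂ)) l
      = (if l = i then (1:ℂ) else 0) + (if l = j then (1:ℂ) else 0) := by
    intro l
    by_cases h1 : l = i
    · subst h1; simp [Pi.single_apply, h]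
    · by_cases h2 : l = j
      · subst h2; simp [Pi.single_apply, h1]
      · simp [Pi.single_apply, h1, h2]
  rw [Finset.sum_congr rfl fun l _ => this l, Finset.sum_add_distrib]
  simp

lemma gen_sq {M : ℕ} (i : Fin M) : gen M i * gen M i = 1 := by
  rw [gen, CliffordAlgebra.ι_sq_scalar, Qform_single, map_one]

lemma gen_anticomm {M : ℕ} {i j : Fin M} (h : i ≠ j) :
    gen M i * gen M j = -(gen M j * gen M i) :=
  CliffordAlgebra.ι_mul_ι_comm_of_isOrtho (Qform_isOrtho h)

/-- `a_i = e_i ⊗ e_i`. -/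
def A (N : ℕ) (i : Fin N) : Cl N ⊗[ℂ] Cl N := gen N i ⊗ₜ[ℂ] gen N i

lemma A_sq {N : ℕ} (i : Fin N) : A N i * A N i = 1 := by
  rw [A, Algebra.TensorProduct.tmul_mul_tmul, gen_sq, Algebra.TensorProduct.one_def]

lemma A_comm {N : ℕ} (i j : Fin N) : A N i * A N j = A N j * A N i := by
  rcases eq_or_ne i j with rfl | h
  · rfl
  · rw [A, A, Algebra.TensorProduct.tmul_mul_tmul, Algebra.TensorProduct.tmul_mul_tmul,
      gen_anticomm h, TensorProduct.neg_tmul, TensorProduct.tmul_neg, neg_neg]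

lemma Ct1_eq (N : ℕ) : Ct1 N = ∑ i : Fin N, A N i := rfl

/-- The factor `1 + ε_i a_i`. -/
def Fct (N : ℕ) (ε : Fin N → ℂ) (i : Fin N) : Cl N ⊗[ℂ] Cl N := 1 + ε i • A N i

/-- The candidate eigenvector, as a product over a list. -/
def V (N : ℕ) (ε : Fin N → ℂ) (l : List (Fin N)) : Cl N ⊗[ℂ] Cl N :=
  (l.map (Fct N ε)).prod

@[simp] lemma V_nil (N : ℕ) (ε : Fin N → ℂ) : V N ε [] = 1 := rfl

lemma V_cons (N : ℕ) (ε : Fin N → ℂ) (i : Fin N) (l : List (Fin N)) :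
    V N ε (i :: l) = Fct N ε i * V N ε l := by
  simp [V]

lemma A_mul_Fct_self {N : ℕ} {ε : Fin N → ℂ} {i : Fin N} (hε : ε i * ε i = 1) :
    A N i * Fct N ε i = ε i • Fct N ε i := by
  rw [Fct, mul_add, mul_one, mul_smul_comm, A_sq, smul_add, smul_smul, hε, one_smul]
  rw [add_comm]

lemma A_mul_Fct_ne {N : ℕ} {ε : Fin N → ℂ} {i j : Fin N} :
    A N i * Fct N ε j = Fct N ε j * A N i := by
  rw [Fct, mul_add, add_mul, mul_one, one_mul, mul_smul_comm, smul_mul_assoc, A_comm]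

lemma A_mul_V {N : ℕ} {ε : Fin N → ℂ} (hε : ∀ i, ε i * ε i = 1) (i : Fin N) :
    ∀ l : List (Fin N), i ∈ l → A N i * V N ε l = ε i • V N ε l := by
  intro l
  induction l with
  | nil => intro h; simp at h
  | cons j t ih =>
    intro hmem
    rw [V_cons]
    rcases eq_or_ne i j with rfl | hij
    · rw [← mul_assoc, A_mul_Fct_self (hε i), smul_mul_assoc]
    · have hit : i ∈ t := by
        rcases List.mem_cons.mp hmem with h | h
        · exact absurd h hij
        · exact h
      rw [← mul_assoc, A_mul_Fct_ne, mul_assoc, ih hit, mul_smul_comm]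

lemma Ct1_mul_V {N : ℕ} {ε : Fin N → ℂ} (hε : ∀ i, ε i * ε i = 1) :
    Ct1 N * V N ε (List.finRange N) = (∑ i, ε i) • V N ε (List.finRange N) := by
  rw [Ct1_eq, Finset.sum_mul, Finset.sum_smul]
  exact Finset.sum_congr rfl fun i _ => A_mul_V hε i _ (List.mem_finRange i)

lemma Ct1_pow_mul_V {N : ℕ} {ε : Fin N → ℂ} (hε : ∀ i, ε i * ε i = 1) (m : ℕ) :
    Ct1 N ^ m * V N ε (List.finRange N) = (∑ i, ε i) ^ m • V N ε (List.finRange N) := by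
  induction m with
  | zero => simp
  | succ m ih =>
    rw [pow_succ, mul_assoc, Ct1_mul_V hε, mul_smul_comm, ih, smul_smul, pow_succ, mul_comm]

/-! ### The scalar-part functional -/

/-- The bilinear form used by `changeForm` to `Q' = 0`. -/
def Bf (N : ℕ) : LinearMap.BilinForm ℂ (Fin N → ℂ) :=
  QuadraticMap.associated (R := ℂ) (-(Qform N))

lemma hB (N : ℕ) : (Bf N).toQuadraticMap = 0 - Qform N :=
  CliffordAlgebra.changeForm.associated_neg_proof

lemma Bf_single_ne {N : ℕ} {i j : Fin N} (h : i ≠ j) :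
    Bf N (Pi.single i 1) (Pi.single j 1) = 0 := by
  rw [Bf, QuadraticMap.associated_apply]
  have := Qform_isOrtho h
  rw [QuadraticMap.isOrtho_def] at this
  simp [this]

/-- The "scalar part" linear functional on `Cl N`. -/
def lam0 (N : ℕ) : Cl N →ₗ[ℂ] ℂ :=
  (ExteriorAlgebra.algebraMapInv (R := ℂ) (M := Fin N → ℂ)).toLinearMap ∘ₗ
    CliffordAlgebra.changeForm (hB N)

/-- Ordered product of generators over a list. -/
def P (N : ℕ) (t : List (Fin N)) : Cl N := (t.map (gen N)).prod

@[simp] lemma P_nil (N : ℕ) : P N [] = 1 := rfl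

lemma P_cons (N : ℕ) (j : Fin N) (t : List (Fin N)) :
    P N (j :: t) = gen N j * P N t := by simp [P]

lemma contract_changeForm_P {N : ℕ} :
    ∀ t : List (Fin N), t.Nodup → ∀ i : Fin N, i ∉ t →
      CliffordAlgebra.contractLeft (Q := (0 : QuadraticForm ℂ (Fin N → ℂ)))
        (Bf N (Pi.single i 1)) (CliffordAlgebra.changeForm (hB N) (P N t)) = 0 := by
  intro t
  induction t with
  | nil =>
    intro _ i _
    rw [P_nil, CliffordAlgebra.changeForm_one, CliffordAlgebra.contractLeft_one]
  | cons j t ih =>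
    intro hnd i hi
    have hjt : j ∉ t := (List.nodup_cons.mp hnd).1
    have htnd : t.Nodup := (List.nodup_cons.mp hnd).2
    have hij : i ≠ j := fun h => hi (h ▸ (List.mem_cons_self : j ∈ j :: t))
    have hit : i ∉ t := fun h => hi (List.mem_cons_of_mem j h)
    rw [P_cons, gen, CliffordAlgebra.changeForm_ι_mul, ih htnd j hjt, sub_zero,
      CliffordAlgebra.contractLeft_ι_mul, ih htnd i hit, mul_zero, sub_zero,
      Bf_single_ne hij, zero_smul]

lemma lam0_one (N : ℕ) : lam0 N 1 = 1 := by
  rw [lam0, LinearMap.comp_apply, CliffordAlgebra.changeForm_one]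
  simp

lemma lam0_P {N : ℕ} (t : List (Fin N)) (hnd : t.Nodup) (hne : t ≠ []) :
    lam0 N (P N t) = 0 := by
  cases t with
  | nil => exact absurd rfl hne
  | cons j t =>
    have hjt : j ∉ t := (List.nodup_cons.mp hnd).1
    have htnd : t.Nodup := (List.nodup_cons.mp hnd).2
    rw [lam0, LinearMap.comp_apply, P_cons, gen, CliffordAlgebra.changeForm_ι_mul,
      contract_changeForm_P t htnd j hjt, sub_zero]
    rw [AlgHom.toLinearMap_apply, map_mul]
    have : ExteriorAlgebra.algebraMapInv
        ((CliffordAlgebra.ι (0 : QuadraticForm ℂ (Fin N → ℂ))) (Pi.single j 1)) = 0 := by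
      simp [ExteriorAlgebra.algebraMapInv]
    rw [this, zero_mul]

/-- The functional `F(x ⊗ y) = λ₀(x)·λ₀(y)` on the tensor product. -/
def Ffun (N : ℕ) : Cl N ⊗[ℂ] Cl N →ₗ[ℂ] ℂ :=
  LinearMap.mul' ℂ ℂ ∘ₗ TensorProduct.map (lam0 N) (lam0 N)

lemma Ffun_tmul (N : ℕ) (x y : Cl N) : Ffun N (x ⊗ₜ[ℂ] y) = lam0 N x * lam0 N y := by
  simp [Ffun]

/-- The set of "higher" terms. -/
def Zset (N : ℕ) (l : List (Fin N)) : Set (Cl N ⊗[ℂ] Cl N) :=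
  {x | ∃ t : List (Fin N), t ≠ [] ∧ t.Nodup ∧ (∀ j ∈ t, j ∈ l) ∧ x = P N t ⊗ₜ[ℂ] P N t}

lemma Zset_mono {N : ℕ} {l : List (Fin N)} (i : Fin N) :
    Zset N l ⊆ Zset N (i :: l) := by
  rintro x ⟨t, h1, h2, h3, h4⟩
  exact ⟨t, h1, h2, fun j hj => List.mem_cons_of_mem i (h3 j hj), h4⟩

lemma A_mul_Zset {N : ℕ} {l : List (Fin N)} {i : Fin N} (hil : i ∉ l) {x : Cl N ⊗[ℂ] Cl N}
    (hx : x ∈ Zset N l) : A N i * x ∈ Zset N (i :: l) := by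
  obtain ⟨t, h1, h2, h3, rfl⟩ := hx
  refine ⟨i :: t, List.cons_ne_nil _ _, ?_, ?_, ?_⟩
  · exact List.nodup_cons.mpr ⟨fun h => hil (h3 i h), h2⟩
  · intro j hj
    rcases List.mem_cons.mp hj with rfl | hj
    · exact List.mem_cons_self
    · exact List.mem_cons_of_mem i (h3 j hj)
  · rw [A, Algebra.TensorProduct.tmul_mul_tmul, P_cons]

lemma A_mul_span_Zset {N : ℕ} {l : List (Fin N)} {i : Fin N} (hil : i ∉ l)
    {z : Cl N ⊗[ℂ] Cl N} (hz : z ∈ Submodule.span ℂ (Zset N l)) :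
    A N i * z ∈ Submodule.span ℂ (Zset N (i :: l)) := by
  induction hz using Submodule.span_induction with
  | mem x hx => exact Submodule.subset_span (A_mul_Zset hil hx)
  | zero => rw [mul_zero]; exact Submodule.zero_mem _
  | add x y _ _ hx hy => rw [mul_add]; exact Submodule.add_mem _ hx hy
  | smul c x _ hx => rw [mul_smul_comm]; exact Submodule.smul_mem _ c hx

lemma V_decomp {N : ℕ} (ε : Fin N → ℂ) :
    ∀ l : List (Fin N), l.Nodup →
      ∃ z ∈ Submodule.span ℂ (Zset N l), V N ε l = 1 ⊗ₜ[ℂ] 1 + z := by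
  intro l
  induction l with
  | nil =>
    intro _
    exact ⟨0, Submodule.zero_mem _, by simp [Algebra.TensorProduct.one_def]⟩
  | cons i l ih =>
    intro hnd
    have hil : i ∉ l := (List.nodup_cons.mp hnd).1
    obtain ⟨z, hz, hV⟩ := ih (List.nodup_cons.mp hnd).2
    refine ⟨z + ε i • (A N i * (1 ⊗ₜ[ℂ] 1 + z)), ?_, ?_⟩
    · refine Submodule.add_mem _
        (Submodule.span_mono (Zset_mono i) hz) (Submodule.smul_mem _ _ ?_)
      rw [mul_add]
      refine Submodule.add_mem _ ?_ (A_mul_span_Zset hil hz)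
      have : A N i * (1 ⊗ₜ[ℂ] 1) ∈ Zset N (i :: l) := by
        refine ⟨[i], List.cons_ne_nil _ _, List.nodup_singleton i,
          fun j hj => by rw [List.mem_singleton.mp hj]; exact List.mem_cons_self, ?_⟩
        rw [A, Algebra.TensorProduct.tmul_mul_tmul]
        simp [P]
      exact Submodule.subset_span this
    · rw [V_cons, hV, Fct, add_mul, one_mul, smul_mul_assoc]
      abel

lemma Ffun_Zset {N : ℕ} {l : List (Fin N)} {x : Cl N ⊗[ℂ] Cl N} (hx : x ∈ Zset N l) :
    Ffun N x = 0 := by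
  obtain ⟨t, h1, h2, _, rfl⟩ := hx
  rw [Ffun_tmul, lam0_P t h2 h1, mul_zero]

lemma Ffun_span_Zset {N : ℕ} {l : List (Fin N)} {z : Cl N ⊗[ℂ] Cl N}
    (hz : z ∈ Submodule.span ℂ (Zset N l)) : Ffun N z = 0 := by
  induction hz using Submodule.span_induction with
  | mem x hx => exact Ffun_Zset hx
  | zero => simp
  | add x y _ _ hx hy => rw [map_add, hx, hy, add_zero]
  | smul c x _ hx => rw [map_smul, hx, smul_zero]

lemma Ffun_V {N : ℕ} (ε : Fin N → ℂ) : Ffun N (V N ε (List.finRange N)) = 1 := by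
  obtain ⟨z, hz, hV⟩ := V_decomp ε (List.finRange N) (List.nodup_finRange N)
  rw [hV, map_add, Ffun_span_Zset hz, add_zero, Ffun_tmul, lam0_one, mul_one]

lemma V_ne_zero {N : ℕ} (ε : Fin N → ℂ) : V N ε (List.finRange N) ≠ 0 := by
  intro h
  have := Ffun_V ε
  rw [h, map_zero] at this
  exact zero_ne_one this

/-! ### The sign vectors and their eigenvalues -/

/-- Sign vector with `k` entries equal to `-1`. -/
def sgn (N : ℕ) (k : Fin (N + 1)) (i : Fin N) : ℂ := if (i : ℕ) < (k : ℕ) then -1 else 1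

lemma sgn_sq (N : ℕ) (k : Fin (N + 1)) (i : Fin N) : sgn N k i * sgn N k i = 1 := by
  by_cases hi : (i : ℕ) < (k : ℕ)
  · rw [sgn, if_pos hi]; norm_num
  · rw [sgn, if_neg hi]; norm_num

lemma sum_sgn (N : ℕ) (k : Fin (N + 1)) :
    ∑ i, sgn N k i = (N : ℂ) - 2 * (k : ℕ) := by
  have hk : (k : ℕ) ≤ N := Nat.lt_succ_iff.mp k.isLt
  simp only [sgn]
  rw [Fin.sum_univ_eq_sum_range (fun n => if n < (k : ℕ) then (-1 : ℂ) else 1) N]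
  rw [Finset.range_eq_Ico, ← Finset.sum_Ico_consecutive _ (Nat.zero_le (k : ℕ)) hk]
  rw [Finset.sum_congr rfl (fun i hi => if_pos (Finset.mem_Ico.mp hi).2),
    Finset.sum_congr (rfl : Finset.Ico (k:ℕ) N = _)
      (fun i hi => if_neg (not_lt.mpr (Finset.mem_Ico.mp hi).1))]
  rw [Finset.sum_const, Finset.sum_const, Nat.card_Ico, Nat.card_Ico, Nat.sub_zero]
  simp only [nsmul_eq_mul]
  push_cast [hk]
  ring

lemma eig_injective (N : ℕ) :
    Function.Injective (fun k : Fin (N + 1) => (N : ℂ) - 2 * (k : ℕ)) := by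
  intro k₁ k₂ h
  simp only [sub_right_inj] at h
  have : ((k₁ : ℕ) : ℂ) = ((k₂ : ℕ) : ℂ) := by
    field_simp at h
    exact_mod_cast h
  exact Fin.ext (Nat.cast_injective this)

end Prop14

open Prop14 in
/-- Proof of Proposition 1.4: the `N+1` elements `1, C̃_1, C̃_1², …, C̃_1^N` are
linearly independent over `ℂ` in `Cl(N) ⊗ Cl(N)`. -/
theorem Ct1_powers_linearIndependent (N : ℕ) (hN : 1 ≤ N) :
    LinearIndependent ℂ (fun i : Fin (N + 1) => Ct1 N ^ (i : ℕ)) := by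
  rw [Fintype.linearIndependent_iff]
  intro g hg
  have key : ∀ k : Fin (N + 1), ∑ i : Fin (N + 1), g i * ((N : ℂ) - 2 * (k : ℕ)) ^ (i : ℕ) = 0 := by
    intro k
    have h1 : (∑ i : Fin (N + 1), g i • Ct1 N ^ (i : ℕ)) * V N (sgn N k) (List.finRange N) = 0 := by
      rw [hg, zero_mul]
    rw [Finset.sum_mul] at h1
    have h2 : ∀ i : Fin (N + 1),
        (g i • Ct1 N ^ (i : ℕ)) * V N (sgn N k) (List.finRange N)
          = (g i * ((N : ℂ) - 2 * (k : ℕ)) ^ (i : ℕ)) • V N (sgn N k) (List.finRange N) := by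
      intro i
      rw [smul_mul_assoc, Ct1_pow_mul_V (sgn_sq N k), smul_smul, sum_sgn]
    rw [Finset.sum_congr rfl fun i _ => h2 i, ← Finset.sum_smul] at h1
    rcases smul_eq_zero.mp h1 with h | h
    · exact h
    · exact absurd h (V_ne_zero _)
  have := Matrix.eq_zero_of_forall_index_sum_mul_pow_eq_zero (eig_injective N) key
  exact fun i => congrFun this i
end
end

section
/- Let N ≥ 1 and let i = √−1 ∈ ℂ. Then in ℂ[x] one has the factorization P_{N+1}(N, x) = ∏_{r=0}^{N} (x − (N−2r)·i); in particular the roots of P_{N+1}(N, ·) are exactly the N+1 numbers (N−2r)·i, 0 ≤ r ≤ N. (Lemma 1.6(a).) -/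
noncomputable section

/-- The polynomials `P_m(N,x)`: `P_0 = 1`, `P_1 = x`,
`P_{m+1} = x·P_m + m(N+1−m)·P_{m−1}`. -/
def Ppoly (N : ℕ) : ℕ → Polynomial ℂ
  | 0 => 1
  | 1 => Polynomial.X
  | (m + 2) => Polynomial.X * Ppoly N (m + 1) +
      Polynomial.C (((m : ℂ) + 1) * ((N : ℂ) - m)) * Ppoly N m

open Polynomial

lemma Ppoly_rec (N m : ℕ) : Ppoly N (m + 2) = X * Ppoly N (m + 1) +
    C (((m : ℂ) + 1) * ((N : ℂ) - m)) * Ppoly N m := rfl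

lemma Ppoly_key (n : ℕ) : ∀ m : ℕ,
    Ppoly (n + 1) (m + 1) =
      (Ppoly n (m + 1)).comp (X + C Complex.I) -
        C (((m : ℂ) + 1) * Complex.I) * (Ppoly n m).comp (X + C Complex.I) := by
  intro m
  induction m using Nat.strong_induction_on with
  | _ m ih =>
    match m with
    | 0 =>
        simp [Ppoly]
    | 1 =>
        show Ppoly (n+1) 2 = _
        rw [Ppoly_rec, Ppoly_rec]
        apply Polynomial.funext
        intro x
        simp only [Ppoly, eval_add, eval_mul, eval_sub, eval_comp, eval_X, eval_C, eval_one,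
          mul_one]
        push_cast
        linear_combination Complex.I_sq
    | (m + 2) =>
        have h1 := ih (m + 1) (by omega)
        have h0 := ih m (by omega)
        have e4 : Ppoly (n+1) (m + 2 + 1) = X * Ppoly (n+1) (m + 2) +
            C ((((m+1 : ℕ) : ℂ) + 1) * (((n+1 : ℕ) : ℂ) - ((m+1 : ℕ) : ℂ))) *
              Ppoly (n+1) (m + 1) := Ppoly_rec (n+1) (m+1)
        have e3 : Ppoly n (m + 2 + 1) = X * Ppoly n (m + 2) +
            C ((((m+1 : ℕ) : ℂ) + 1) * ((n : ℂ) - ((m+1 : ℕ) : ℂ))) *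
              Ppoly n (m + 1) := Ppoly_rec n (m+1)
        have e2 := Ppoly_rec n m
        rw [e4, h1, h0, e3, e2]
        apply Polynomial.funext
        intro x
        simp only [eval_add, eval_mul, eval_sub, eval_comp, eval_X, eval_C]
        push_cast
        linear_combination (((m : ℂ) + 2) *
          Polynomial.eval (x + Complex.I) (Ppoly n (m + 1))) * Complex.I_sq

lemma Ppoly_top (n : ℕ) : Ppoly n (n + 2) = X * Ppoly n (n + 1) := by
  rw [Ppoly_rec]
  simp

theorem Ppoly_fact_all (N : ℕ) :
    Ppoly N (N + 1) =
      ∏ r ∈ Finset.range (N + 1),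
        (X - C (((N : ℂ) - 2 * r) * Complex.I)) := by
  induction N with
  | zero => simp [Ppoly]
  | succ N ih =>
    have key := Ppoly_key N (N + 1)
    rw [Ppoly_top] at key
    rw [key, mul_comp, X_comp, ih, Polynomial.prod_comp]
    simp only [sub_comp, X_comp, C_comp]
    conv_rhs => rw [Finset.prod_range_succ']
    have hp : ∏ r ∈ Finset.range (N + 1),
        (X + C Complex.I - C (((N : ℂ) - 2 * r) * Complex.I)) =
        ∏ r ∈ Finset.range (N + 1),
        (X - C (((((N+1 : ℕ)) : ℂ) - 2 * ((r + 1 : ℕ) : ℂ)) * Complex.I)) := by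
      refine Finset.prod_congr rfl fun r _ => ?_
      rw [sub_eq_add_neg (X : ℂ[X]), ← C_neg, add_sub_assoc, ← C_sub]
      congr 1
      push_cast
      ring
    rw [hp, ← sub_mul]
    rw [show (X : ℂ[X]) + C Complex.I - C ((((N+1 : ℕ) : ℂ) + 1) * Complex.I) =
        X - C ((((N+1 : ℕ) : ℂ) - 2 * ((0 : ℕ) : ℂ)) * Complex.I) from by
      rw [sub_eq_add_neg (X : ℂ[X]), ← C_neg, add_sub_assoc, ← C_sub]
      congr 1
      push_cast
      ring]
    ring

/-- Lemma 1.6(a): `P_{N+1}(N, x) = ∏_{r=0}^{N} (x − (N−2r)·i)`; in particular the roots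
of `P_{N+1}(N, ·)` are exactly the `N+1` numbers `(N−2r)·i`, `0 ≤ r ≤ N`. -/
theorem Ppoly_factorization (N : ℕ) (hN : 1 ≤ N) :
    Ppoly N (N + 1) =
      ∏ r ∈ Finset.range (N + 1),
        (Polynomial.X - Polynomial.C (((N : ℂ) - 2 * r) * Complex.I)) := by
  exact Ppoly_fact_all N
end
end

section
/- Let N ≥ 1 and let i = √−1. The characteristic polynomial of the complex (N+1)×(N+1) matrix E − F equals ∏_{r=0}^{N} (X − (N−2r)·i); equivalently, the eigenvalues of E − F are exactly the N+1 distinct numbers (N−2r)·i for 0 ≤ r ≤ N. (Lemma 1.5(a).) -/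
noncomputable section

/-- The matrix of `E` acting on the `(N+1)`-dimensional irreducible representation of
`sl₂`: `E·e_r = (N−r+1)·e_{r−1}`, i.e. `E_{r−1,r} = N−r+1` for `1 ≤ r ≤ N`. -/
def Emat (N : ℕ) : Matrix (Fin (N + 1)) (Fin (N + 1)) ℂ :=
  fun r c => if (c : ℕ) = (r : ℕ) + 1 then (N : ℂ) - (r : ℕ) else 0

/-- The matrix of `F`: `F·e_r = (r+1)·e_{r+1}`, i.e. `F_{r+1,r} = r+1` for `0 ≤ r ≤ N−1`. -/
def Fmat (N : ℕ) : Matrix (Fin (N + 1)) (Fin (N + 1)) ℂ :=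
  fun r c => if (r : ℕ) = (c : ℕ) + 1 then (r : ℕ) else 0

namespace CharpolyAux

open Polynomial

def gp (m r : ℕ) : Polynomial ℂ := (1 + C Complex.I * X)^m * (1 - C Complex.I * X)^r


lemma hI2 : (C Complex.I : Polynomial ℂ)^2 = -1 := by
  rw [← map_pow, Complex.I_sq, map_neg, map_one]

lemma da (m : ℕ) :
    (1 + X^2) * derivative ((1 + C Complex.I * X)^m)
      = (C (m:ℂ) * X + C ((m:ℂ) * Complex.I)) * (1 + C Complex.I * X)^m := by
  rw [derivative_pow]
  cases m with
  | zero => simp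
  | succ k =>
    have h : derivative (1 + C Complex.I * X) = C Complex.I := by simp
    rw [h, pow_succ]
    simp only [map_mul, map_add, map_one, C_eq_natCast]
    push_cast
    linear_combination (-(((k:Polynomial ℂ) + 1) * ((1 + C Complex.I * X)^k) * X)) * hI2

lemma db (r : ℕ) :
    (1 + X^2) * derivative ((1 - C Complex.I * X)^r)
      = (C (r:ℂ) * X - C ((r:ℂ) * Complex.I)) * (1 - C Complex.I * X)^r := by
  rw [derivative_pow]
  cases r with
  | zero => simp
  | succ k =>
    have h : derivative (1 - C Complex.I * X) = -C Complex.I := by simp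
    rw [h, pow_succ]
    simp only [map_mul, map_add, map_one, C_eq_natCast]
    push_cast
    linear_combination (-(((k:Polynomial ℂ) + 1) * ((1 - C Complex.I * X)^k) * X)) * hI2






lemma deriv_g (m r : ℕ) :
    (1 + X^2) * derivative (gp m r)
      = (C ((m:ℂ)+r) * X + C (((m:ℂ)-(r:ℂ)) * Complex.I)) * gp m r := by
  unfold gp
  rw [derivative_mul]
  have h1 := da m
  have h2 := db r
  have expand : (1 + X^2) * (derivative ((1 + C Complex.I * X)^m) * (1 - C Complex.I * X)^r
      + (1 + C Complex.I * X)^m * derivative ((1 - C Complex.I * X)^r))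
      = ((1 + X^2) * derivative ((1 + C Complex.I * X)^m)) * (1 - C Complex.I * X)^r
      + (1 + C Complex.I * X)^m * ((1 + X^2) * derivative ((1 - C Complex.I * X)^r)) := by ring
  rw [expand, h1, h2]
  simp only [map_mul, map_add, map_sub]
  ring





lemma coeff_lhs (p : Polynomial ℂ) (t : ℕ) :
    ((1 + X^2) * derivative p).coeff (t+2)
      = p.coeff (t+3) * ((t:ℂ)+3) + p.coeff (t+1) * ((t:ℂ)+1) := by
  have : (1 + X^2) * derivative p = derivative p + X^2 * derivative p := by ring
  rw [this, coeff_add, coeff_X_pow_mul (derivative p) 2 t, coeff_derivative, coeff_derivative]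
  push_cast; ring

lemma coeff_rhs (a b : ℂ) (p : Polynomial ℂ) (t : ℕ) :
    ((C a * X + C b) * p).coeff (t+1) = a * p.coeff t + b * p.coeff (t+1) := by
  have : (C a * X + C b) * p = C a * (X * p) + C b * p := by ring
  rw [this, coeff_add, coeff_C_mul, coeff_C_mul, coeff_X_mul]

lemma key0 (m r : ℕ) :
    (gp m r).coeff 1 = ((m:ℂ)-r) * Complex.I * (gp m r).coeff 0 := by
  have h := congrArg (fun p => p.coeff 0) (deriv_g m r)
  simp only [mul_coeff_zero, coeff_add, coeff_one_zero, coeff_derivative,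
    coeff_X_pow, coeff_C_mul, coeff_X_zero, coeff_C] at h
  norm_num at h
  linear_combination h

lemma key1 (m r : ℕ) :
    2 * (gp m r).coeff 2 = ((m:ℂ)+r) * (gp m r).coeff 0
      + ((m:ℂ)-r) * Complex.I * (gp m r).coeff 1 := by
  have h := congrArg (fun p => p.coeff 1) (deriv_g m r)
  have e1 : ((1 + X^2) * derivative (gp m r)).coeff 1 = (gp m r).coeff 2 * 2 := by
    rw [show (1+X^2)*derivative (gp m r) = derivative (gp m r) + X*(X*derivative (gp m r)) by ring,
      coeff_add, coeff_X_mul, mul_coeff_zero, coeff_derivative]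
    norm_num
  rw [e1, coeff_rhs ((m:ℂ)+r) (((m:ℂ)-(r:ℂ)) * Complex.I) (gp m r) 0] at h
  push_cast at h ⊢
  linear_combination h

lemma keyn (m r t : ℕ) :
    ((t:ℂ)+3) * (gp m r).coeff (t+3)
      = ((m:ℂ)+r-(t:ℂ)-1) * (gp m r).coeff (t+1)
        + ((m:ℂ)-r) * Complex.I * (gp m r).coeff (t+2) := by
  have h := congrArg (fun p => p.coeff (t+2)) (deriv_g m r)
  simp only [coeff_lhs] at h
  rw [coeff_rhs] at h
  linear_combination h





lemma keyAll (m r s : ℕ) (hs : 1 ≤ s) :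
    ((s:ℂ)+1) * (gp m r).coeff (s+1)
      = ((m:ℂ)+r-s+1) * (gp m r).coeff (s-1)
        + ((m:ℂ)-r) * Complex.I * (gp m r).coeff s := by
  match s, hs with
  | 1, _ => simpa using by linear_combination key1 m r
  | (t+2), _ =>
    have h := keyn m r t
    push_cast
    push_cast at h
    linear_combination h

lemma gp_natDegree_le (m r : ℕ) : (gp m r).natDegree ≤ m + r := by
  unfold gp
  apply le_trans (natDegree_mul_le)
  have h1 : (1 + C Complex.I * X : Polynomial ℂ).natDegree ≤ 1 := by compute_degree
  have h2 : (1 - C Complex.I * X : Polynomial ℂ).natDegree ≤ 1 := by compute_degree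
  calc ((1 + C Complex.I * X : Polynomial ℂ)^m).natDegree + ((1 - C Complex.I * X : Polynomial ℂ)^r).natDegree
      ≤ m * 1 + r * 1 := by
        gcongr <;> exact le_trans natDegree_pow_le (by gcongr)
    _ = m + r := by omega

lemma gp_coeff_zero (m r : ℕ) : (gp m r).coeff 0 = 1 := by
  rw [coeff_zero_eq_eval_zero]
  simp [gp]

def wv (N r n : ℕ) : ℂ := (n.factorial : ℂ) * ((N-n).factorial : ℂ) * (gp (N-r) r).coeff n

lemma wrec (N r s : ℕ) (hr : r ≤ N) (hN : 1 ≤ N) (hs : s ≤ N) :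
    ((N:ℂ) - s) * wv N r (s+1) - (s:ℂ) * wv N r (s-1)
      = ((N:ℂ) - 2*r) * Complex.I * wv N r s := by
  have hm : ((N - r : ℕ) : ℂ) = (N:ℂ) - r := by push_cast [hr]; ring
  rcases Nat.eq_or_lt_of_le hs with hsN | hsN
  · -- s = N
    subst hsN
    have hdeg : (gp (s-r) r).coeff (s+1) = 0 := by
      apply coeff_eq_zero_of_natDegree_lt
      have : (gp (s-r) r).natDegree ≤ s := le_trans (gp_natDegree_le _ _) (by omega)
      omega
    obtain ⟨t, rfl⟩ : ∃ t, s = t + 1 := ⟨s-1, by omega⟩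
    have hA := keyAll (t+1-r) r (t+1) (by omega)
    rw [hm] at hA
    rw [hdeg] at hA
    simp only [wv, show t+1-(t+1+1) = 0 from by omega, show t+1-1 = t from rfl,
      show t+1-(t+1) = 0 from by omega, show t+1-t = 1 from by omega, Nat.factorial_one,
      Nat.factorial_zero, Nat.factorial_succ]
    push_cast
    push_cast at hA
    linear_combination (((t:ℂ)+1) * (t.factorial:ℂ)) * hA
  · rcases Nat.exists_eq_add_of_lt hsN with ⟨k, hk⟩
    subst hk
    rcases Nat.eq_zero_or_pos s with rfl | hs1
    · simp only [Nat.zero_add]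
      have h0 := key0 (k+1-r) r
      rw [Nat.cast_sub (by omega)] at h0
      simp only [wv, show k+1-1 = k from rfl, show k+1-0 = k+1 from rfl,
        show (0:ℕ)-1 = 0 from rfl, Nat.factorial_zero, Nat.factorial_one, Nat.factorial_succ]
      push_cast
      push_cast at h0
      linear_combination (((k:ℂ)+1) * (k.factorial:ℂ)) * h0
    · obtain ⟨t, rfl⟩ : ∃ t, s = t + 1 := ⟨s-1, by omega⟩
      have hA := keyAll (t+1+k+1-r) r (t+1) (by omega)
      rw [Nat.cast_sub (by omega)] at hA
      simp only [wv, show t+1+k+1-(t+1+1) = k from by omega, show t+1-1 = t from rfl,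
        show t+1+k+1-t = k+2 from by omega, show t+1+k+1-(t+1) = k+1 from by omega,
        Nat.factorial_succ]
      push_cast
      push_cast at hA
      linear_combination (((t:ℂ)+1) * (t.factorial:ℂ) * ((k:ℂ)+1) * (k.factorial:ℂ)) * hA

lemma wv_zero_ne (N r : ℕ) : wv N r 0 ≠ 0 := by
  simp only [wv, Nat.factorial_zero, gp_coeff_zero, Nat.cast_one, one_mul, mul_one,
    Nat.sub_zero]
  exact_mod_cast Nat.cast_ne_zero.mpr (N.factorial_ne_zero)

lemma mulvec_eig (N r : ℕ) (hr : r ≤ N) (hN : 1 ≤ N) :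
    (Emat N - Fmat N).mulVec (fun s : Fin (N+1) => wv N r s) =
      (((N:ℂ) - 2*r) * Complex.I) • (fun s : Fin (N+1) => wv N r s) := by
  funext s
  have hsN : (s : ℕ) ≤ N := Nat.lt_succ_iff.mp s.isLt
  show ∑ c : Fin (N+1), (Emat N - Fmat N) s c * wv N r c = _
  have : ∀ c : Fin (N+1), (Emat N - Fmat N) s c * wv N r c =
      (fun n : ℕ => (if n = (s:ℕ)+1 then ((N:ℂ) - (s:ℕ)) * wv N r n else 0)
        - (if (s:ℕ) = n+1 then ((s:ℕ):ℂ) * wv N r n else 0)) (c : ℕ) := by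
    intro c
    simp only [Emat, Fmat, Matrix.sub_apply]
    split_ifs <;> ring
  rw [Finset.sum_congr rfl (fun c _ => this c)]
  rw [Fin.sum_univ_eq_sum_range (fun n : ℕ => (if n = (s:ℕ)+1 then ((N:ℂ) - (s:ℕ)) * wv N r n else 0) - (if (s:ℕ) = n+1 then ((s:ℕ):ℂ) * wv N r n else 0)) (N+1)]
  rw [Finset.sum_sub_distrib]
  rw [Finset.sum_ite_eq' (Finset.range (N+1)) ((s:ℕ)+1) (fun n => ((N:ℂ) - (s:ℕ)) * wv N r n)]
  have h1 : (if (s:ℕ)+1 ∈ Finset.range (N+1) then ((N:ℂ) - (s:ℕ)) * wv N r ((s:ℕ)+1) else 0)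
      = ((N:ℂ) - (s:ℕ)) * wv N r ((s:ℕ)+1) := by
    split_ifs with h
    · rfl
    · have : (s:ℕ) = N := by simp [Finset.mem_range] at h; omega
      rw [this, sub_self, zero_mul]
  rw [h1]
  have h2 : (∑ n ∈ Finset.range (N+1), if (s:ℕ) = n+1 then ((s:ℕ):ℂ) * wv N r n else 0)
      = ((s:ℕ):ℂ) * wv N r ((s:ℕ)-1) := by
    rcases Nat.eq_zero_or_pos (s:ℕ) with h0 | h0
    · rw [h0]
      simp
    · obtain ⟨t, ht⟩ : ∃ t, (s:ℕ) = t + 1 := ⟨(s:ℕ)-1, by omega⟩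
      rw [ht]
      simp only [add_left_inj, Nat.add_sub_cancel]
      rw [Finset.sum_ite_eq (Finset.range (N+1)) t (fun n => (((t+1:ℕ)):ℂ) * wv N r n)]
      rw [if_pos (Finset.mem_range.mpr (by omega))]
  rw [h2]
  have := wrec N r (s:ℕ) hr hN hsN
  simp only [Pi.smul_apply, smul_eq_mul]
  linear_combination this


end CharpolyAux

open CharpolyAux Polynomial

lemma eval_charpoly' {n : ℕ} (M : Matrix (Fin n) (Fin n) ℂ) (μ : ℂ) :
    M.charpoly.eval μ = (Matrix.diagonal (fun _ => μ) - M).det := by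
  rw [Matrix.charpoly, ← Polynomial.coe_evalRingHom, RingHom.map_det]
  congr 1
  ext i j
  by_cases h : i = j
  · subst h
    simp [Matrix.charmatrix_apply_eq, Matrix.diagonal]
  · simp [Matrix.charmatrix_apply_ne _ _ _ h, Matrix.diagonal, h]

/-- Lemma 1.5(a): the characteristic polynomial of `E − F` is
`∏_{r=0}^{N} (X − (N−2r)·i)`; equivalently the eigenvalues of `E − F` are exactly the
`N+1` distinct numbers `(N−2r)·i`, `0 ≤ r ≤ N`. -/
theorem charpoly_E_sub_F (N : ℕ) (hN : 1 ≤ N) :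
    (Emat N - Fmat N).charpoly =
      ∏ r ∈ Finset.range (N + 1),
        (Polynomial.X - Polynomial.C (((N : ℂ) - 2 * r) * Complex.I)) := by
  set p := (Emat N - Fmat N).charpoly with hp
  have hmonic : p.Monic := Matrix.charpoly_monic _
  have hdeg : p.natDegree = N + 1 := by
    rw [hp, Matrix.charpoly_natDegree_eq_dim]
    simp
  have hroot : ∀ r : ℕ, r ≤ N → p.IsRoot (((N:ℂ) - 2*r) * Complex.I) := by
    intro r hr
    have hev := mulvec_eig N r hr hN
    have hker : ∃ v, v ≠ 0 ∧
        (Matrix.diagonal (fun _ => ((N:ℂ) - 2*r) * Complex.I) - (Emat N - Fmat N)).mulVec v = 0 := by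
      refine ⟨fun s : Fin (N+1) => wv N r s, ?_, ?_⟩
      · intro h
        exact wv_zero_ne N r (congrFun h 0)
      · rw [Matrix.sub_mulVec, hev]
        funext i
        simp [Matrix.mulVec_diagonal]
    rw [IsRoot, eval_charpoly']
    exact Matrix.exists_mulVec_eq_zero_iff.mp hker
  -- multiset of claimed roots
  set f : ℕ → ℂ := fun r => ((N:ℂ) - 2*r) * Complex.I with hf
  have hinj : Function.Injective f := by
    intro a b hab
    have : ((a:ℂ)) = b := by
      have h2 : ((N:ℂ) - 2*a) = ((N:ℂ) - 2*b) := by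
        have := mul_right_cancel₀ Complex.I_ne_zero hab
        exact this
      linear_combination -h2/2
    exact_mod_cast this
  set m : Multiset ℂ := (Multiset.range (N+1)).map f with hm
  have hnodup : m.Nodup := (Multiset.nodup_range (N+1)).map hinj
  have hmem : ∀ x ∈ m, x ∈ p.roots := by
    intro x hx
    rw [hm, Multiset.mem_map] at hx
    obtain ⟨r, hr, rfl⟩ := hx
    rw [Polynomial.mem_roots hmonic.ne_zero]
    refine hroot r ?_
    rw [Multiset.mem_range] at hr
    omega
  have hle : m ≤ p.roots := (Multiset.le_iff_subset hnodup).mpr hmem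
  have hcard : p.roots.card ≤ N + 1 := hdeg ▸ p.card_roots'
  have hmcard : m.card = N + 1 := by simp [hm]
  have heq : m = p.roots := Multiset.eq_of_le_of_card_le hle (by omega)
  have hsplit : p = (p.roots.map fun a => X - C a).prod :=
    (IsAlgClosed.splits p).eq_prod_roots_of_monic hmonic
  rw [hsplit, ← heq, hm, Multiset.map_map]
  rw [Finset.prod_eq_multiset_prod]
  simp [Finset.range_val, Function.comp, hf]
end
end

section
/- Let N ≥ 1 and suppose λ ∈ ℂ satisfies P_{N+1}(N, λ) = 0. Define x(λ) ∈ ℂ^{N+1} by x(λ)_s = (N−s)!·P_s(N, λ)/N! for 0 ≤ s ≤ N. Then (E − F)·x(λ) = λ·x(λ) and x(λ)_0 = 1; that is, x(λ) is the right eigenvector of E − F for the eigenvalue λ, normalized to have 0-th coordinate 1, and its coordinates are given by the polynomials P_s. (Lemma 1.6(b).) -/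
noncomputable section

lemma Ppoly_eval_rec (N m : ℕ) (lam : ℂ) :
    (Ppoly N (m + 2)).eval lam =
      lam * (Ppoly N (m + 1)).eval lam +
        ((m : ℂ) + 1) * ((N : ℂ) - m) * (Ppoly N m).eval lam := by
  simp [Ppoly]

lemma aux_sum_ite_val {M : Type*} [AddCommMonoid M] {n k : ℕ} (hk : k < n)
    (f : Fin n → M) :
    (∑ c : Fin n, if (c : ℕ) = k then f c else 0) = f ⟨k, hk⟩ := by
  rw [Finset.sum_eq_single (⟨k, hk⟩ : Fin n)]
  · simp
  · intro c _ hc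
    have : (c : ℕ) ≠ k := fun h => hc (Fin.ext h)
    simp [this]
  · simp

lemma aux_sum_ite_val_zero {M : Type*} [AddCommMonoid M] {n k : ℕ} (hk : n ≤ k)
    (f : Fin n → M) :
    (∑ c : Fin n, if (c : ℕ) = k then f c else 0) = 0 := by
  apply Finset.sum_eq_zero
  intro c _
  have := c.isLt
  have : (c : ℕ) ≠ k := by omega
  simp [this]

/-- Lemma 1.6(b): if `P_{N+1}(N, λ) = 0` then the vector
`x(λ)_s = (N−s)!·P_s(N,λ)/N!` is the right eigenvector of `E − F` for the eigenvalue
`λ`, normalized so that `x(λ)_0 = 1`. -/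
theorem eigenvector_of_root (N : ℕ) (hN : 1 ≤ N) (lam : ℂ)
    (hlam : (Ppoly N (N + 1)).eval lam = 0) :
    (Emat N - Fmat N).mulVec
        (fun s : Fin (N + 1) => ((N - (s : ℕ)).factorial : ℂ) * (Ppoly N s).eval lam /
          (N.factorial : ℂ)) =
      lam • (fun s : Fin (N + 1) => ((N - (s : ℕ)).factorial : ℂ) * (Ppoly N s).eval lam /
          (N.factorial : ℂ)) ∧
    ((N - ((0 : Fin (N + 1)) : ℕ)).factorial : ℂ) * (Ppoly N 0).eval lam /
        (N.factorial : ℂ) = 1 := by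
  have hfac : (N.factorial : ℂ) ≠ 0 := Nat.cast_ne_zero.mpr N.factorial_ne_zero
  set X : Fin (N + 1) → ℂ :=
    fun s => ((N - (s : ℕ)).factorial : ℂ) * (Ppoly N s).eval lam / (N.factorial : ℂ)
    with hX
  constructor
  · funext s
    have hkN : (s : ℕ) ≤ N := Nat.lt_succ_iff.mp s.isLt
    simp only [Matrix.mulVec, dotProduct, Matrix.sub_apply, Emat, Fmat,
      Pi.smul_apply, smul_eq_mul, sub_mul, ite_mul, zero_mul, Finset.sum_sub_distrib]
    set k := (s : ℕ) with hk
    rcases Nat.eq_or_lt_of_le hkN with hkeq | hklt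
    · -- k = N : last row
      rw [aux_sum_ite_val_zero (show N + 1 ≤ k + 1 by omega)]
      have hcond : ∀ c : Fin (N + 1), ((k : ℕ) = (c : ℕ) + 1) = ((c : ℕ) = k - 1) := by
        intro c; rw [eq_iff_iff]; omega
      simp only [hcond]
      rw [aux_sum_ite_val (show k - 1 < N + 1 by omega)]
      simp only [hX, ← hk]
      rw [hkeq]
      rw [show N - (N - 1) = 1 by omega, show N - N = 0 by omega]
      -- transform hlam
      rw [show N + 1 = (N - 1) + 2 by omega, Ppoly_eval_rec,
        show (N - 1) + 1 = N by omega] at hlam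
      rw [show ((N - 1 : ℕ) : ℂ) = (N : ℂ) - 1 by
        push_cast [Nat.cast_sub hN]; try ring] at hlam
      simp only [Nat.factorial_zero, Nat.factorial_one, Nat.cast_one]
      linear_combination (-(1 : ℂ) / (N.factorial : ℂ)) * hlam
    · -- k < N
      rw [aux_sum_ite_val (show k + 1 < N + 1 by omega)]
      have hfval : ((⟨k + 1, by omega⟩ : Fin (N + 1)) : ℕ) = k + 1 := rfl
      rcases Nat.eq_zero_or_pos k with hk0 | hkpos
      · -- first row
        have hcond : ∀ c : Fin (N + 1), ((k : ℕ) = (c : ℕ) + 1) = False := by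
          intro c
          rw [eq_iff_iff, hk0]
          simp
        simp only [hcond, if_false, Finset.sum_const_zero, sub_zero]
        simp only [hX, hfval, ← hk]
        rw [hk0]
        have hP0 : (Ppoly N 0).eval lam = 1 := by simp [Ppoly]
        have hP1 : (Ppoly N 1).eval lam = lam := by simp [Ppoly]
        rw [show (0 : ℕ) + 1 = 1 from rfl, hP0, hP1, Nat.sub_zero]
        have hNfac : (N.factorial : ℂ) = (N : ℂ) * ((N - 1).factorial : ℂ) := by
          rw [← Nat.cast_mul, Nat.mul_factorial_pred (by omega)]
        rw [hNfac]
        have h1ne : ((N - 1).factorial : ℂ) ≠ 0 := Nat.cast_ne_zero.mpr (Nat.factorial_ne_zero _)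
        have hNne : (N : ℂ) ≠ 0 := Nat.cast_ne_zero.mpr (by omega)
        field_simp
        ring
      · -- middle rows : 1 ≤ k < N
        have hcond : ∀ c : Fin (N + 1), ((k : ℕ) = (c : ℕ) + 1) = ((c : ℕ) = k - 1) := by
          intro c; rw [eq_iff_iff]; omega
        simp only [hcond]
        rw [aux_sum_ite_val (show k - 1 < N + 1 by omega)]
        have hgval : ((⟨k - 1, by omega⟩ : Fin (N + 1)) : ℕ) = k - 1 := rfl
        simp only [hX, hfval, hgval, ← hk]
        -- recurrence : P_{k+1} = lam P_k + k (N-k+1) P_{k-1}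
        have hrec := Ppoly_eval_rec N (k - 1) lam
        rw [show (k - 1) + 1 = k by omega, show (k - 1) + 2 = k + 1 by omega] at hrec
        rw [show ((k - 1 : ℕ) : ℂ) = (k : ℂ) - 1 by
          push_cast [Nat.cast_sub hkpos]; try ring] at hrec
        rw [hrec]
        -- factorial identities
        have hf1 : ((N - k).factorial : ℂ) =
            ((N : ℂ) - k) * ((N - (k + 1)).factorial : ℂ) := by
          rw [show N - k = (N - (k + 1)) + 1 by omega, Nat.factorial_succ]
          push_cast
          rw [show ((N - (k + 1) : ℕ) : ℂ) = (N : ℂ) - k - 1 by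
            push_cast [Nat.cast_sub (show k + 1 ≤ N by omega)]; try ring]
          ring
        have hf2 : ((N - (k - 1)).factorial : ℂ) =
            ((N : ℂ) - k + 1) * ((N - k).factorial : ℂ) := by
          rw [show N - (k - 1) = (N - k) + 1 by omega, Nat.factorial_succ]
          push_cast
          rw [show ((N - k : ℕ) : ℂ) = (N : ℂ) - k by
            push_cast [Nat.cast_sub (le_of_lt hklt)]; try ring]
          try ring
        rw [hf2, hf1]
        field_simp
        ring
  · have hP0 : (Ppoly N 0).eval lam = 1 := by simp [Ppoly]
    simp [hP0, Nat.sub_zero, div_self hfac, hX]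
end
end

section
/- Let k ≥ 1 be an integer. For every ε ∈ {+1, −1}^k, the map sending j ∈ {1, …, k} to ε_j·(k−j) − ∑_{i=1}^{j−1} ε_i is a bijection from {1, …, k} onto the set {k+1−2r : 1 ≤ r ≤ k} = {k−1, k−3, …, 1−k}. (Combinatorial claim in the proof of Lemma 4.2.) -/
noncomputable section

/-- The combinatorial claim in the proof of Lemma 4.2: for any sign vector
`ε ∈ {+1,−1}^k`, the map `j ↦ ε_j(k−j) − ∑_{i=1}^{j−1} ε_i` (here written with the
0-based index `j : Fin k`, so `j ↦ ε_j(k−1−j) − ∑_{i<j} ε_i`) is a bijection from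
`{1,…,k}` onto `{k+1−2r : 1 ≤ r ≤ k} = {k−1, k−3, …, 1−k}`. -/
theorem sign_vector_bijection (k : ℕ) (hk : 1 ≤ k) (ε : Fin k → ℤ)
    (hε : ∀ j, ε j = 1 ∨ ε j = -1) :
    Set.BijOn (fun j : Fin k => ε j * ((k : ℤ) - 1 - (j : ℕ)) - ∑ i ∈ Finset.Iio j, ε i)
      Set.univ
      {m : ℤ | ∃ r : ℤ, 1 ≤ r ∧ r ≤ (k : ℤ) ∧ m = (k : ℤ) + 1 - 2 * r} := by
  set f : Fin k → ℤ :=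
    fun j => ε j * ((k : ℤ) - 1 - (j : ℕ)) - ∑ i ∈ Finset.Iio j, ε i with hf
  set T : Set ℤ := {m : ℤ | ∃ r : ℤ, 1 ≤ r ∧ r ≤ (k : ℤ) ∧ m = (k : ℤ) + 1 - 2 * r} with hT
  -- bound on partial sums
  have hSbound : ∀ j : Fin k, |∑ i ∈ Finset.Iio j, ε i| ≤ (j : ℤ) := by
    intro j
    calc |∑ i ∈ Finset.Iio j, ε i| ≤ ∑ i ∈ Finset.Iio j, |ε i| :=
          Finset.abs_sum_le_sum_abs _ _
      _ = ∑ _i ∈ Finset.Iio j, (1 : ℤ) := by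
          refine Finset.sum_congr rfl fun i _ => ?_
          rcases hε i with h | h <;> simp [h]
      _ = (j : ℤ) := by simp [Fin.card_Iio]
  -- parity of partial sums
  have hSpar : ∀ j : Fin k, (2 : ℤ) ∣ ((∑ i ∈ Finset.Iio j, ε i) + (j : ℤ)) := by
    intro j
    have h : (∑ i ∈ Finset.Iio j, ε i) + (j : ℤ) = ∑ i ∈ Finset.Iio j, (ε i + 1) := by
      rw [Finset.sum_add_distrib]
      simp [Fin.card_Iio]
    rw [h]
    refine Finset.dvd_sum fun i _ => ?_
    rcases hε i with h | h <;> simp [h]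
  -- maps to
  have hmaps : Set.MapsTo f Set.univ T := by
    intro j _
    have hj : (j : ℕ) < k := j.isLt
    have hS := hSbound j
    have hS2 := hSpar j
    rw [abs_le] at hS
    have key : f j ≤ (k : ℤ) - 1 ∧ 1 - (k : ℤ) ≤ f j ∧ (2 : ℤ) ∣ ((k : ℤ) + 1 - f j) := by
      rcases hε j with h | h <;> simp only [hf, h, one_mul, neg_one_mul] <;> omega
    refine ⟨((k : ℤ) + 1 - f j) / 2, ?_, ?_, ?_⟩ <;> omega
  -- injectivity
  have hkey : ∀ a b : Fin k, a < b → f a ≠ f b := by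
    intro a b hlt heq
    have hab : (a : ℕ) < (b : ℕ) := hlt
    have hbk : (b : ℕ) < k := b.isLt
    have hsplit : Finset.Iio b = Finset.Iio a ∪ Finset.Ico a b := by
      ext x
      simp only [Finset.mem_Iio, Finset.mem_union, Finset.mem_Ico, Fin.lt_def, Fin.le_def]
      omega
    have hdisj : Disjoint (Finset.Iio a) (Finset.Ico a b) := by
      rw [Finset.disjoint_left]
      intro x hx hx'
      simp only [Finset.mem_Iio, Finset.mem_Ico] at hx hx'
      exact absurd hx (not_lt.mpr hx'.1)
    have hIco : Finset.Ico a b = insert a (Finset.Ioo a b) := (Finset.Ioo_insert_left hlt).symm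
    have hSb : ∑ i ∈ Finset.Iio b, ε i
        = (∑ i ∈ Finset.Iio a, ε i) + (ε a + ∑ i ∈ Finset.Ioo a b, ε i) := by
      rw [hsplit, Finset.sum_union hdisj, hIco, Finset.sum_insert (by simp)]
    have hTb : |∑ i ∈ Finset.Ioo a b, ε i| ≤ (((b : ℕ) - (a : ℕ) - 1 : ℕ) : ℤ) := by
      calc |∑ i ∈ Finset.Ioo a b, ε i| ≤ ∑ i ∈ Finset.Ioo a b, |ε i| :=
            Finset.abs_sum_le_sum_abs _ _
        _ = ∑ _i ∈ Finset.Ioo a b, (1 : ℤ) := by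
            refine Finset.sum_congr rfl fun i _ => ?_
            rcases hε i with h | h <;> simp [h]
        _ = (((b : ℕ) - (a : ℕ) - 1 : ℕ) : ℤ) := by simp [Fin.card_Ioo]
    rw [abs_le] at hTb
    simp only [hf] at heq
    rw [hSb] at heq
    rcases hε a with ha | ha <;> rcases hε b with hb | hb <;>
      simp only [ha, hb, one_mul, neg_one_mul] at heq <;> omega
  have hinj : Set.InjOn f Set.univ := by
    intro a _ b _ heq
    by_contra hne
    rcases lt_or_gt_of_ne hne with h | h
    · exact hkey a b h heq
    · exact hkey b a h heq.symm
  -- counting for surjectivity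
  have hTeq : T = (fun r : ℤ => (k : ℤ) + 1 - 2 * r) '' Set.Icc 1 (k : ℤ) := by
    ext m
    constructor
    · rintro ⟨r, h1, h2, h3⟩
      exact ⟨r, ⟨h1, h2⟩, h3.symm⟩
    · rintro ⟨r, ⟨h1, h2⟩, h3⟩
      exact ⟨r, h1, h2, h3.symm⟩
  have hTfin : T.Finite := by
    rw [hTeq]; exact (Set.finite_Icc _ _).image _
  have hTcard : T.ncard = k := by
    rw [hTeq, Set.ncard_image_of_injective _ (fun x y h => by omega : Function.Injective _),
      ← Finset.coe_Icc, Set.ncard_coe_finset, Int.card_Icc]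
    omega
  have hdomcard : (f '' Set.univ).ncard = k := by
    rw [Set.ncard_image_of_injOn hinj, Set.ncard_univ, Nat.card_eq_fintype_card,
      Fintype.card_fin]
  have himg : f '' Set.univ = T :=
    Set.eq_of_subset_of_ncard_le (Set.MapsTo.image_subset hmaps)
      (by rw [hTcard, hdomcard]) hTfin
  exact ⟨hmaps, hinj, fun m hm => himg ▸ hm⟩
end
end

section
/- Let k ≥ 1 and let q ∈ ℂ be nonzero. Define v = ∑_{ε ∈ {+1,−1}^k} (−q)^{n(ε)} · w_ε ⊗ w_{−ε} ∈ W ⊗ W, where n(ε) = ∑_{j=1}^{k} ((1−ε_j)/2)·(k−j) ∈ ℕ. Then C v = (−1)^{k−1} · [k] · v, where [k] = q^{k−1} + q^{k−3} + ⋯ + q^{1−k} = ∑_{r=1}^{k} q^{k+1−2r}. In particular v is an eigenvector of C with eigenvalue ±[k]. (Key computation in the proof of Lemma 4.2.) -/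
noncomputable section

/-- The sign `±1` encoded by a boolean (`true ↦ +1`, `false ↦ −1`). -/
def sgn (b : Bool) : ℤ := if b then 1 else -1

/-- Negate the `j`-th entry of a sign vector. -/
def flipAt {k : ℕ} (ε : Fin k → Bool) (j : Fin k) : Fin k → Bool :=
  Function.update ε j (!(ε j))

/-- `m_j(ε,δ) = ∑_{i=1}^{j−1} (δ_i − ε_i)/2 ∈ ℤ`. -/
def mexp {k : ℕ} (ε δ : Fin k → Bool) (j : Fin k) : ℤ :=
  ∑ i ∈ Finset.Iio j, (sgn (δ i) - sgn (ε i)) / 2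

/-- The vector space `W ⊗ W`, modeled as functions on pairs of sign vectors
(the basis vector `w_ε ⊗ w_δ` corresponding to the pair `(ε, δ)`). -/
abbrev WW (k : ℕ) := ((Fin k → Bool) × (Fin k → Bool)) → ℂ

/-- The operator `C` on `W ⊗ W`, determined on basis vectors by
`C(w_ε ⊗ w_δ) = ∑_{j : ε_j = −δ_j} (−q)^{m_j(ε,δ)} w_{ε̄^j} ⊗ w_{δ̄^j}`. -/
def Cop (k : ℕ) (q : ℂ) (v : WW k) : WW k := fun p =>
  ∑ j ∈ Finset.univ.filter (fun j : Fin k => p.1 j ≠ p.2 j),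
    (-q) ^ (mexp p.1 p.2 j) * v (flipAt p.1 j, flipAt p.2 j)

/-- `n(ε) = ∑_{j=1}^k ((1−ε_j)/2)·(k−j) ∈ ℕ` (0-based: weight `k−1−j` at entry `j`). -/
def nexp {k : ℕ} (ε : Fin k → Bool) : ℕ :=
  ∑ j : Fin k, if ε j then 0 else k - 1 - (j : ℕ)

/-- The vector `v = ∑_{ε} (−q)^{n(ε)} w_ε ⊗ w_{−ε} ∈ W ⊗ W`. -/
def vvec (k : ℕ) (q : ℂ) : WW k := fun p =>
  if p.2 = fun j => !(p.1 j) then (-q) ^ nexp p.1 else 0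

namespace CopAux

variable {k : ℕ}

/-- number of `true`s strictly before `j` -/
def tc (ε : Fin k → Bool) (j : Fin k) : ℕ :=
  ((Finset.Iio j).filter (fun i => ε i = true)).card

/-- number of `false`s strictly before `j` -/
def fc (ε : Fin k → Bool) (j : Fin k) : ℕ :=
  ((Finset.Iio j).filter (fun i => ε i = false)).card

lemma tc_add_fc (ε : Fin k → Bool) (j : Fin k) : tc ε j + fc ε j = (j : ℕ) := by
  have h : ((Finset.Iio j).filter (fun i => ε i = false)) =
      ((Finset.Iio j).filter (fun i => ¬ (ε i = true))) := by
    apply Finset.filter_congr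
    intro i _
    simp
  rw [tc, fc, h, Finset.card_filter_add_card_filter_not, Fin.card_Iio]

def Tc (ε : Fin k → Bool) : ℕ := (Finset.univ.filter (fun i => ε i = true)).card
def Fc (ε : Fin k → Bool) : ℕ := (Finset.univ.filter (fun i => ε i = false)).card

lemma Tc_add_Fc (ε : Fin k → Bool) : Tc ε + Fc ε = k := by
  have h : (Finset.univ.filter (fun i : Fin k => ε i = false)) =
      (Finset.univ.filter (fun i => ¬ (ε i = true))) := by
    apply Finset.filter_congr
    intro i _
    simp
  rw [Tc, Fc, h, Finset.card_filter_add_card_filter_not]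
  simp

lemma tc_lt_Tc {ε : Fin k → Bool} {j : Fin k} (h : ε j = true) : tc ε j < Tc ε := by
  apply Finset.card_lt_card
  rw [Finset.ssubset_iff_of_subset (Finset.filter_subset_filter _ (Finset.subset_univ _))]
  exact ⟨j, by simp [h], by simp⟩

lemma fc_lt_Fc {ε : Fin k → Bool} {j : Fin k} (h : ε j = false) : fc ε j < Fc ε := by
  apply Finset.card_lt_card
  rw [Finset.ssubset_iff_of_subset (Finset.filter_subset_filter _ (Finset.subset_univ _))]
  exact ⟨j, by simp [h], by simp⟩

lemma tc_lt_tc {ε : Fin k → Bool} {j j' : Fin k} (hlt : j < j') (h : ε j = true) :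
    tc ε j < tc ε j' := by
  apply Finset.card_lt_card
  rw [Finset.ssubset_iff_of_subset
    (Finset.filter_subset_filter _ (Finset.Iio_subset_Iio hlt.le))]
  exact ⟨j, by simp [h, hlt], by simp⟩

lemma fc_lt_fc {ε : Fin k → Bool} {j j' : Fin k} (hlt : j < j') (h : ε j = false) :
    fc ε j < fc ε j' := by
  apply Finset.card_lt_card
  rw [Finset.ssubset_iff_of_subset
    (Finset.filter_subset_filter _ (Finset.Iio_subset_Iio hlt.le))]
  exact ⟨j, by simp [h, hlt], by simp⟩

/-- the reindexing map -/
def rn (ε : Fin k → Bool) (j : Fin k) : ℕ := if ε j then tc ε j else k - 1 - fc ε j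

lemma tc_le (ε : Fin k → Bool) (j : Fin k) : tc ε j ≤ (j : ℕ) := by
  have := tc_add_fc ε j; omega

lemma rn_lt (ε : Fin k → Bool) (j : Fin k) : rn ε j < k := by
  have h1 := tc_le ε j
  have h2 := j.isLt
  rw [rn]
  split <;> omega

lemma rn_ne {ε : Fin k → Bool} {j j' : Fin k} (hlt : j < j') : rn ε j ≠ rn ε j' := by
  have hT := Tc_add_Fc ε
  have hj := j.isLt
  have hj' := j'.isLt
  have h1 := tc_add_fc ε j
  have h2 := tc_add_fc ε j'
  cases hεj : ε j <;> cases hεj' : ε j'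
  · have h5 := fc_lt_fc hlt hεj
    have h6 := fc_lt_Fc hεj'
    simp [rn, hεj, hεj']
    omega
  · have h5 := fc_lt_Fc hεj
    have h6 := tc_lt_Tc hεj'
    simp [rn, hεj, hεj']
    omega
  · have h5 := tc_lt_Tc hεj
    have h6 := fc_lt_Fc hεj'
    simp [rn, hεj, hεj']
    omega
  · have h5 := tc_lt_tc hlt hεj
    simp [rn, hεj, hεj']
    omega

def rfin (ε : Fin k → Bool) (j : Fin k) : Fin k := ⟨rn ε j, rn_lt ε j⟩

lemma rfin_bij (ε : Fin k → Bool) : Function.Bijective (rfin ε) := by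
  rw [← Finite.injective_iff_bijective]
  intro j j' h
  have h' : rn ε j = rn ε j' := congrArg Fin.val h
  rcases lt_trichotomy j j' with hlt | heq | hgt
  · exact absurd h' (rn_ne hlt)
  · exact heq
  · exact absurd h'.symm (rn_ne hgt)

lemma mexp_eq (ε : Fin k → Bool) (j : Fin k) :
    mexp ε (fun i => !(ε i)) j = (j : ℕ) - 2 * (tc ε j : ℤ) := by
  rw [mexp]
  have h : ∀ i ∈ Finset.Iio j,
      (sgn (!(ε i)) - sgn (ε i)) / 2 = 1 - 2 * (if ε i = true then (1:ℤ) else 0) := by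
    intro i _
    cases hεi : ε i <;> simp [sgn, hεi]
  rw [Finset.sum_congr rfl h, Finset.sum_sub_distrib, Finset.sum_const, ← Finset.mul_sum,
    Finset.sum_boole, Fin.card_Iio, tc]
  push_cast
  ring

lemma nexp_flip (ε : Fin k → Bool) (j : Fin k) :
    (nexp (flipAt ε j) : ℤ) - (nexp ε : ℤ) =
      if ε j then ((k:ℤ) - 1 - (j:ℕ)) else ((j:ℕ) - ((k:ℤ) - 1)) := by
  have hn1 : nexp (flipAt ε j) =
      (∑ x ∈ Finset.univ.erase j, if ε x then 0 else k - 1 - (x : ℕ)) +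
        (if !(ε j) then 0 else k - 1 - (j : ℕ)) := by
    rw [nexp, ← Finset.sum_erase_add Finset.univ _ (Finset.mem_univ j)]
    simp only [flipAt, Function.update_self]
    congr 1
    apply Finset.sum_congr rfl
    intro x hx
    simp only [Function.update_of_ne (Finset.ne_of_mem_erase hx)]
  have hn2 : nexp ε =
      (∑ x ∈ Finset.univ.erase j, if ε x then 0 else k - 1 - (x : ℕ)) +
        (if ε j then 0 else k - 1 - (j : ℕ)) := by
    rw [nexp, ← Finset.sum_erase_add Finset.univ _ (Finset.mem_univ j)]
  have hj := j.isLt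
  rw [hn1, hn2]
  cases hεj : ε j <;> simp <;> omega

lemma Eexp_eq (ε : Fin k → Bool) (j : Fin k) :
    mexp ε (fun i => !(ε i)) j + (nexp (flipAt ε j) : ℤ) - (nexp ε : ℤ) =
      (k : ℤ) - 1 - 2 * (rn ε j) := by
  have h1 := mexp_eq ε j
  have h2 := nexp_flip ε j
  have h3 := tc_add_fc ε j
  have hj := j.isLt
  cases hεj : ε j
  · rw [hεj] at h2
    simp only [Bool.false_eq_true, if_false] at h2
    simp [rn, hεj]
    omega
  · rw [hεj] at h2
    simp only [if_true] at h2
    simp [rn, hεj]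
    omega

lemma sign_zpow (q : ℂ) (hk : 1 ≤ k) (r : ℕ) :
    (-q) ^ ((k:ℤ) - 1 - 2 * r) = (-1 : ℂ) ^ (k - 1) * q ^ ((k:ℤ) - 1 - 2 * r) := by
  have hsplit : (k:ℤ) - 1 - 2 * r = ((k - 1 : ℕ) : ℤ) + 2 * (-(r:ℤ)) := by
    push_cast; omega
  have hneg : (-q) = (-1) * q := by ring
  rw [hneg, mul_zpow]
  congr 1
  rw [hsplit, zpow_add₀ (by norm_num : (-1:ℂ) ≠ 0), zpow_natCast, zpow_mul]
  norm_num

lemma key (hk : 1 ≤ k) (q : ℂ) (hq : q ≠ 0) (ε : Fin k → Bool) :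
    ∑ j : Fin k,
        (-q) ^ (mexp ε (fun i => !(ε i)) j + (nexp (flipAt ε j) : ℤ) - (nexp ε : ℤ)) =
      (-1 : ℂ) ^ (k - 1) * ∑ r ∈ Finset.range k, q ^ ((k : ℤ) - 1 - 2 * r) := by
  have step1 : ∀ j : Fin k,
      (-q) ^ (mexp ε (fun i => !(ε i)) j + (nexp (flipAt ε j) : ℤ) - (nexp ε : ℤ)) =
        (-1 : ℂ) ^ (k - 1) * q ^ ((k:ℤ) - 1 - 2 * (rn ε j)) := by
    intro j
    rw [Eexp_eq, sign_zpow q hk]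
  rw [Finset.sum_congr rfl (fun j _ => step1 j), ← Finset.mul_sum]
  congr 1
  have hbij := Fintype.sum_bijective (rfin ε) (rfin_bij ε)
    (fun j => q ^ ((k:ℤ) - 1 - 2 * (rn ε j)))
    (fun i : Fin k => q ^ ((k:ℤ) - 1 - 2 * (i : ℕ)))
    (fun j => rfl)
  rw [hbij, Fin.sum_univ_eq_sum_range (fun r => q ^ ((k:ℤ) - 1 - 2 * r)) k]

lemma flip_rel {ε δ : Fin k → Bool} {j : Fin k}
    (h : flipAt δ j = fun i => !(flipAt ε j i)) : δ = fun i => !(ε i) := by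
  funext i
  have hi := congrFun h i
  by_cases hij : i = j
  · subst hij
    rw [flipAt, flipAt, Function.update_self, Function.update_self] at hi
    simpa using hi
  · rw [flipAt, flipAt, Function.update_of_ne hij, Function.update_of_ne hij] at hi
    exact hi

lemma flip_rel' (ε : Fin k → Bool) (j : Fin k) :
    flipAt (fun i => !(ε i)) j = fun i => !(flipAt ε j i) := by
  funext i
  by_cases hij : i = j
  · subst hij
    rw [flipAt, flipAt, Function.update_self, Function.update_self]
  · rw [flipAt, flipAt, Function.update_of_ne hij, Function.update_of_ne hij]

end CopAux

open CopAux

/-- Key computation in the proof of Lemma 4.2: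
`C v = (−1)^{k−1}·[k]·v` where `[k] = ∑_{r=1}^k q^{k+1−2r}`. -/
theorem Cop_vvec_eigen (k : ℕ) (hk : 1 ≤ k) (q : ℂ) (hq : q ≠ 0) :
    Cop k q (vvec k q) =
      ((-1 : ℂ) ^ (k - 1) * ∑ r ∈ Finset.range k, q ^ ((k : ℤ) - 1 - 2 * r)) •
        vvec k q := by
  have hnq : (-q) ≠ 0 := neg_ne_zero.mpr hq
  funext p
  obtain ⟨ε, δ⟩ := p
  simp only [Cop, Pi.smul_apply, smul_eq_mul]
  by_cases h : δ = fun i => !(ε i)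
  · subst h
    have hfilter : (Finset.univ.filter fun j : Fin k =>
        (ε, fun i => !(ε i)).1 j ≠ (ε, fun i => !(ε i)).2 j) = Finset.univ := by
      apply Finset.filter_true_of_mem
      intro j _
      simp
    rw [hfilter]
    have hterm : ∀ j : Fin k,
        (-q) ^ (mexp ε (fun i => !(ε i)) j) *
          vvec k q (flipAt ε j, flipAt (fun i => !(ε i)) j) =
          (-q) ^ (mexp ε (fun i => !(ε i)) j + (nexp (flipAt ε j) : ℤ) - (nexp ε : ℤ)) *
            (-q) ^ (nexp ε : ℤ) := by
      intro j
      rw [vvec]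
      simp only
      rw [if_pos (flip_rel' ε j)]
      rw [← zpow_natCast (-q) (nexp (flipAt ε j)), ← zpow_add₀ hnq, ← zpow_add₀ hnq]
      congr 1
      ring
    calc ∑ j : Fin k, (-q) ^ (mexp ε (fun i => !(ε i)) j) *
          vvec k q (flipAt ε j, flipAt (fun i => !(ε i)) j)
        = (∑ j : Fin k, (-q) ^ (mexp ε (fun i => !(ε i)) j +
            (nexp (flipAt ε j) : ℤ) - (nexp ε : ℤ))) * (-q) ^ (nexp ε : ℤ) := by
          rw [Finset.sum_mul]
          exact Finset.sum_congr rfl (fun j _ => hterm j)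
      _ = ((-1 : ℂ) ^ (k - 1) * ∑ r ∈ Finset.range k, q ^ ((k : ℤ) - 1 - 2 * r)) *
            (-q) ^ (nexp ε : ℤ) := by rw [key hk q hq ε]
      _ = ((-1 : ℂ) ^ (k - 1) * ∑ r ∈ Finset.range k, q ^ ((k : ℤ) - 1 - 2 * r)) *
            vvec k q (ε, fun i => !(ε i)) := by
          simp [vvec, zpow_natCast]
  · have hzero : ∀ j ∈ Finset.univ.filter (fun j : Fin k => (ε, δ).1 j ≠ (ε, δ).2 j),
        (-q) ^ (mexp ε δ j) * vvec k q (flipAt ε j, flipAt δ j) = 0 := by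
      intro j _
      rw [vvec]
      simp only
      rw [if_neg (fun hc => h (flip_rel hc)), mul_zero]
    rw [Finset.sum_eq_zero hzero, vvec]
    simp only
    rw [if_neg h, mul_zero]
end
end

section
/- Let k ≥ 1 and let q ∈ ℂ with q ≠ 0 and q ≠ ±1. For every integer j with −k ≤ j ≤ k, the number [j] = (q^j − q^{−j})/(q − q^{−1}) is an eigenvalue of the linear operator C on W ⊗ W; that is, C has at least the 2k+1 eigenvalues [−k], [−k+1], …, [k−1], [k]. (Lemma 4.2(a).) -/
noncomputable section

/- ===================== auxiliary development ===================== -/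

lemma keySum (q η : ℂ) (hq0 : q ≠ 0) (hD : q - q⁻¹ ≠ 0) (hη : η * η = 1) :
    ∀ (s : ℕ) (t : ℕ → ℤ), (∀ i, t i = 1 ∨ t i = -1) →
    ∑ j ∈ Finset.range s, (-q) ^ (-(∑ i ∈ Finset.range j, t i)) *
      (η * (-q) ^ ((s : ℤ) - 1 - (j : ℤ))) ^ (t j)
      = (-1 : ℂ) ^ (s + 1) * η * (q ^ (s : ℤ) - q ^ (-(s : ℤ))) / (q - q⁻¹) := by
  have hQ : (-q) ≠ 0 := neg_ne_zero.mpr hq0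
  have hη0 : η ≠ 0 := by rintro rfl; simp at hη
  have hηinv : η⁻¹ = η := inv_eq_of_mul_eq_one_right hη
  have h21 : (q^2 - 1 : ℂ) ≠ 0 := by
    have : q^2 - 1 = (q - q⁻¹) * q := by field_simp
    rw [this]; exact mul_ne_zero hD hq0
  intro s
  induction s with
  | zero => intro t ht; simp
  | succ s ih =>
    intro t ht
    rw [Finset.sum_range_succ']
    have key : ∀ j ∈ Finset.range s,
        (-q) ^ (-(∑ i ∈ Finset.range (j+1), t i)) *
          (η * (-q) ^ (((s+1 : ℕ) : ℤ) - 1 - ((j+1 : ℕ) : ℤ))) ^ (t (j+1))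
        = (-q) ^ (-(t 0)) * ((-q) ^ (-(∑ i ∈ Finset.range j, t (i+1))) *
          (η * (-q) ^ ((s : ℤ) - 1 - (j : ℤ))) ^ (t (j+1))) := by
      intro j hj
      rw [Finset.sum_range_succ']
      rw [neg_add, zpow_add₀ hQ]
      have : (((s+1:ℕ)) : ℤ) - 1 - (((j+1:ℕ)) : ℤ) = ((s : ℤ) - 1 - (j : ℤ)) := by push_cast; ring
      rw [this]
      ring
    rw [Finset.sum_congr rfl key, ← Finset.mul_sum, ih _ (fun i => ht (i+1))]
    have hs1 : ((s+1 : ℕ) : ℤ) = (s : ℤ) + 1 := by push_cast; ring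
    rw [hs1]
    have e0 : (s:ℤ) + 1 - 1 - ((0:ℕ) : ℤ) = (s : ℤ) := by norm_num
    rw [e0]
    have hA : q ^ ((s:ℤ)+1) = q ^ (s:ℤ) * q := by rw [zpow_add_one₀ hq0]
    have hB : q ^ (-((s:ℤ)+1)) = q ^ (-(s:ℤ)) * q⁻¹ := by
      rw [neg_add, zpow_add₀ hq0]; norm_num
    have hAB : q ^ (s:ℤ) * q ^ (-(s:ℤ)) = 1 := by
      rw [← zpow_add₀ hq0]; norm_num
    have hQs : (-q) ^ (s:ℤ) = (-1:ℂ)^s * q ^ (s:ℤ) := by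
      rw [neg_eq_neg_one_mul, mul_zpow, zpow_natCast]
    have hsum0 : ∑ i ∈ Finset.range 0, t i = 0 := rfl
    rw [hsum0, neg_zero, zpow_zero, hA, hB]
    set A := q ^ (s:ℤ) with hAdef
    set B := q ^ (-(s:ℤ)) with hBdef
    have hA0 : A ≠ 0 := zpow_ne_zero _ hq0
    rw [pow_succ, pow_succ]
    rcases ht 0 with h0 | h0 <;> rw [h0]
    · simp only [zpow_one, zpow_neg_one]
      rw [hQs]
      have hq2 : (-1 + q^2 : ℂ) ≠ 0 := by intro h; apply h21; linear_combination h
      have hq3 : (-q + q^3 : ℂ) ≠ 0 := by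
        have : (-q + q^3 : ℂ) = q * (-1 + q^2) := by ring
        rw [this]; exact mul_ne_zero hq0 hq2
      have e3 : ((-q + q^3 : ℂ))⁻¹ = (-1 + q^2)⁻¹ * q⁻¹ := by
        rw [show (-q+q^3:ℂ) = (-1+q^2)*q by ring, mul_inv]
      have i2 : (-1+q^2:ℂ) * (-1+q^2)⁻¹ = 1 := mul_inv_cancel₀ hq2
      have iq : q * q⁻¹ = 1 := mul_inv_cancel₀ hq0
      field_simp [hq2, hq3]
      have hc : (q*q - 1 : ℂ) ≠ 0 := by intro h; apply h21; linear_combination h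
      have hqc : (q*(q*q-1) : ℂ) ≠ 0 := mul_ne_zero hq0 hc
      ring
    · have hABinv : A⁻¹ = B := inv_eq_of_mul_eq_one_right hAB
      have hinv : (η * (-q) ^ (s:ℤ))⁻¹ = η * ((-1:ℂ)^s * B) := by
        rw [mul_inv, hηinv, hQs, mul_inv, hABinv]
        congr 1
        rw [← inv_pow, inv_neg, inv_one]
      rw [show (-(-1 : ℤ)) = (1:ℤ) by norm_num, zpow_one, zpow_neg_one, hinv]
      have hq2 : (-1 + q^2 : ℂ) ≠ 0 := by
        intro h; apply h21; linear_combination h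
      have hq3 : (-q + q^3 : ℂ) ≠ 0 := by
        have : (-q + q^3 : ℂ) = q * (-1 + q^2) := by ring
        rw [this]; exact mul_ne_zero hq0 hq2
      have e3 : ((-q + q^3 : ℂ))⁻¹ = (-1 + q^2)⁻¹ * q⁻¹ := by
        rw [show (-q+q^3:ℂ) = (-1+q^2)*q by ring, mul_inv]
      have i2 : (-1+q^2:ℂ) * (-1+q^2)⁻¹ = 1 := mul_inv_cancel₀ hq2
      have iq : q * q⁻¹ = 1 := mul_inv_cancel₀ hq0
      field_simp [hq2, hq3]
      ring

/-- Reindexing a sum over `{j : Fin k // j < s}` as a sum over `range s`. -/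
lemma sum_filter_eq_range {M : Type*} [AddCommMonoid M] {k s : ℕ} (hs : s ≤ k)
    (f : Fin k → M) (g : ℕ → M) (hfg : ∀ j : Fin k, (j : ℕ) < s → f j = g j) :
    ∑ j ∈ Finset.univ.filter (fun j : Fin k => (j : ℕ) < s), f j
      = ∑ j ∈ Finset.range s, g j := by
  refine Finset.sum_bij' (fun (j : Fin k) _ => (j : ℕ))
    (fun (n : ℕ) hn => (⟨n, lt_of_lt_of_le (Finset.mem_range.mp hn) hs⟩ : Fin k))
    ?_ ?_ ?_ ?_ ?_
  · intro a ha
    simp only [Finset.mem_filter, Finset.mem_univ, true_and] at ha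
    exact Finset.mem_range.mpr ha
  · intro a ha
    simp only [Finset.mem_filter, Finset.mem_univ, true_and]
    exact Finset.mem_range.mp ha
  · intro a ha; exact Fin.ext rfl
  · intro a ha; rfl
  · intro a ha
    simp only [Finset.mem_filter, Finset.mem_univ, true_and] at ha
    exact hfg a ha

/-- Reindexing a sum over `Finset.Iio j` as a sum over `range j`. -/
lemma sum_Iio_eq_range {M : Type*} [AddCommMonoid M] {k : ℕ} (j : Fin k)
    (f : Fin k → M) (g : ℕ → M) (hfg : ∀ i : Fin k, i < j → f i = g i) :
    ∑ i ∈ Finset.Iio j, f i = ∑ i ∈ Finset.range (j : ℕ), g i := by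
  refine Finset.sum_bij' (fun (i : Fin k) _ => (i : ℕ))
    (fun (n : ℕ) hn => (⟨n, lt_trans (Finset.mem_range.mp hn) j.isLt⟩ : Fin k))
    ?_ ?_ ?_ ?_ ?_
  · intro a ha
    rw [Finset.mem_Iio, Fin.lt_def] at ha
    exact Finset.mem_range.mpr ha
  · intro a ha
    rw [Finset.mem_range] at ha
    rw [Finset.mem_Iio, Fin.lt_def]
    exact ha
  · intro a ha; exact Fin.ext rfl
  · intro a ha; rfl
  · intro a ha
    exact hfg a (Finset.mem_Iio.mp ha)

/-- The support condition for the eigenvector indexed by `s`. -/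
def vecSupp (k s : ℕ) (p : (Fin k → Bool) × (Fin k → Bool)) : Prop :=
  (∀ i : Fin k, (i : ℕ) < s → p.1 i ≠ p.2 i) ∧
  (∀ i : Fin k, s ≤ (i : ℕ) → p.1 i = true ∧ p.2 i = true)

instance vecSuppDec (k s : ℕ) (p : (Fin k → Bool) × (Fin k → Bool)) :
    Decidable (vecSupp k s p) := by unfold vecSupp; infer_instance

/-- The eigenvector. -/
def vec (k s : ℕ) (q η : ℂ) : WW k := fun p =>
  if vecSupp k s p then
    ∏ i ∈ Finset.univ.filter (fun i : Fin k => (i : ℕ) < s),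
      (if p.1 i = true then 1 else η * (-q) ^ ((s : ℤ) - 1 - (i : ℕ)))
  else 0

lemma flipAt_self {k : ℕ} (ε : Fin k → Bool) (j : Fin k) : flipAt ε j j = !(ε j) :=
  Function.update_self _ _ _

lemma flipAt_ne {k : ℕ} (ε : Fin k → Bool) (j i : Fin k) (h : i ≠ j) :
    flipAt ε j i = ε i := Function.update_of_ne h _ _

lemma vecSupp_flip_iff {k s : ℕ} (p : (Fin k → Bool) × (Fin k → Bool)) (j : Fin k)
    (hj : (j : ℕ) < s) :
    vecSupp k s (flipAt p.1 j, flipAt p.2 j) ↔ vecSupp k s p := by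
  unfold vecSupp
  dsimp only
  constructor
  · rintro ⟨h1, h2⟩
    constructor
    · intro i hi
      by_cases hij : i = j
      · subst hij
        have h := h1 i hi
        rw [flipAt_self, flipAt_self] at h
        intro he; exact h (by rw [he])
      · have h := h1 i hi
        rwa [flipAt_ne _ _ _ hij, flipAt_ne _ _ _ hij] at h
    · intro i hi
      have hij : i ≠ j := by
        intro h; subst h; omega
      have h := h2 i hi
      rwa [flipAt_ne _ _ _ hij, flipAt_ne _ _ _ hij] at h
  · rintro ⟨h1, h2⟩
    constructor
    · intro i hi
      by_cases hij : i = j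
      · subst hij
        rw [flipAt_self, flipAt_self]
        have h := h1 i hi
        intro he
        apply h
        cases hb : p.1 i <;> cases hb2 : p.2 i <;> simp_all
      · rw [flipAt_ne _ _ _ hij, flipAt_ne _ _ _ hij]
        exact h1 i hi
    · intro i hi
      have hij : i ≠ j := by
        intro h; subst h; omega
      rw [flipAt_ne _ _ _ hij, flipAt_ne _ _ _ hij]
      exact h2 i hi

lemma Cop_vec (k s : ℕ) (hs : s ≤ k) (q η : ℂ) (hq0 : q ≠ 0)
    (hD : q - q⁻¹ ≠ 0) (hη : η * η = 1) :
    Cop k q (vec k s q η) =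
      ((-1 : ℂ) ^ (s + 1) * η * (q ^ (s : ℤ) - q ^ (-(s : ℤ))) / (q - q⁻¹)) • vec k s q η := by
  have hη0 : η ≠ 0 := by rintro rfl; simp at hη
  have hQ : (-q : ℂ) ≠ 0 := neg_ne_zero.mpr hq0
  funext p
  simp only [Cop, Pi.smul_apply, smul_eq_mul]
  by_cases hp : vecSupp k s p
  · -- support case
    have hfilter : Finset.univ.filter (fun j : Fin k => p.1 j ≠ p.2 j)
        = Finset.univ.filter (fun j : Fin k => (j : ℕ) < s) := by
      ext j
      simp only [Finset.mem_filter, Finset.mem_univ, true_and]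
      constructor
      · intro hne
        by_contra h
        obtain ⟨ha, hb⟩ := hp.2 j (le_of_not_gt h)
        exact hne (ha.trans hb.symm)
      · intro h; exact hp.1 j h
    rw [hfilter]
    set t : ℕ → ℤ := fun i => if h : i < k then (if p.1 ⟨i, h⟩ = true then 1 else -1) else 1 with htdef
    have ht : ∀ i, t i = 1 ∨ t i = -1 := by
      intro i; simp only [htdef]; split_ifs <;> simp
    have hterm : ∀ j : Fin k, (j : ℕ) < s →
        (-q) ^ (mexp p.1 p.2 j) * vec k s q η (flipAt p.1 j, flipAt p.2 j)
        = (-q) ^ (-(∑ i ∈ Finset.range (j : ℕ), t i)) *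
            (η * (-q) ^ ((s : ℤ) - 1 - ((j : ℕ) : ℤ))) ^ (t (j : ℕ)) *
            vec k s q η p := by
      intro j hj
      have hflip : vecSupp k s (flipAt p.1 j, flipAt p.2 j) :=
        (vecSupp_flip_iff p j hj).mpr hp
      have hm : mexp p.1 p.2 j = -(∑ i ∈ Finset.range (j : ℕ), t i) := by
        unfold mexp
        have h' : (∑ i ∈ Finset.Iio j, (sgn (p.2 i) - sgn (p.1 i)) / 2)
            = ∑ n ∈ Finset.range (j : ℕ), -(t n) := by
          apply sum_Iio_eq_range
          intro i hij
          have his : (i : ℕ) < s := lt_trans (Fin.lt_def.mp hij) hj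
          have hne := hp.1 i his
          have hti : t (i : ℕ) = (if p.1 i = true then 1 else -1) := by
            simp [htdef]
          show (sgn (p.2 i) - sgn (p.1 i)) / 2 = -(t (i : ℕ))
          rw [hti]
          cases hb : p.1 i <;> cases hb2 : p.2 i <;> simp_all [sgn]
        rw [h', Finset.sum_neg_distrib]
      have hteq : t ((j : ℕ)) = (if p.1 j = true then 1 else -1) := by
        simp [htdef]
      have hx0 : (η * (-q) ^ ((s : ℤ) - 1 - ((j : ℕ) : ℤ))) ≠ 0 :=
        mul_ne_zero hη0 (zpow_ne_zero _ hQ)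
      have hv : vec k s q η (flipAt p.1 j, flipAt p.2 j)
          = (η * (-q) ^ ((s : ℤ) - 1 - ((j : ℕ) : ℤ))) ^ (t (j : ℕ)) * vec k s q η p := by
        unfold vec
        rw [if_pos hflip, if_pos hp]
        dsimp only
        have hjmem : j ∈ Finset.univ.filter (fun i : Fin k => (i : ℕ) < s) :=
          Finset.mem_filter.mpr ⟨Finset.mem_univ j, hj⟩
        rw [← Finset.mul_prod_erase _
            (fun i : Fin k => if flipAt p.1 j i = true then 1
              else η * (-q) ^ ((s : ℤ) - 1 - ((i : ℕ) : ℤ))) hjmem,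
          ← Finset.mul_prod_erase _
            (fun i : Fin k => if p.1 i = true then 1
              else η * (-q) ^ ((s : ℤ) - 1 - ((i : ℕ) : ℤ))) hjmem]
        have herase :
            ∏ i ∈ (Finset.univ.filter (fun i : Fin k => (i : ℕ) < s)).erase j,
              (if flipAt p.1 j i = true then 1 else η * (-q) ^ ((s : ℤ) - 1 - ((i : ℕ) : ℤ)))
            = ∏ i ∈ (Finset.univ.filter (fun i : Fin k => (i : ℕ) < s)).erase j,
              (if p.1 i = true then 1 else η * (-q) ^ ((s : ℤ) - 1 - ((i : ℕ) : ℤ))) := by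
          apply Finset.prod_congr rfl
          intro i hi
          rw [flipAt_ne _ _ _ (Finset.ne_of_mem_erase hi)]
        rw [herase, flipAt_self, hteq]
        cases hb : p.1 j
        · simp only [hb, Bool.not_false, Bool.false_eq_true, Bool.true_eq_false,
            if_true, if_false, ite_true, ite_false, reduceIte]
          rw [zpow_neg_one, one_mul, inv_mul_cancel_left₀ hx0]
        · simp only [hb, Bool.not_true, Bool.false_eq_true, Bool.true_eq_false,
            if_true, if_false, ite_true, ite_false, reduceIte]
          rw [zpow_one, one_mul]
      rw [hm, hv]
      ring
    rw [sum_filter_eq_range hs _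
        (fun n => (-q) ^ (-(∑ i ∈ Finset.range n, t i)) *
          (η * (-q) ^ ((s : ℤ) - 1 - (n : ℤ))) ^ (t n) * vec k s q η p) hterm,
      ← Finset.sum_mul, keySum q η hq0 hD hη s t ht]
  · -- off support
    have hzero : vec k s q η p = 0 := by
      unfold vec; rw [if_neg hp]
    rw [hzero, mul_zero]
    apply Finset.sum_eq_zero
    intro j hjmem
    simp only [Finset.mem_filter, Finset.mem_univ, true_and] at hjmem
    have : vec k s q η (flipAt p.1 j, flipAt p.2 j) = 0 := by
      unfold vec
      rw [if_neg]
      intro hsupp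
      by_cases hj : (j : ℕ) < s
      · exact hp ((vecSupp_flip_iff p j hj).mp hsupp)
      · obtain ⟨ha0, hb0⟩ := hsupp.2 j (le_of_not_gt hj)
        have ha : flipAt p.1 j j = true := ha0
        have hb : flipAt p.2 j j = true := hb0
        rw [flipAt_self] at ha hb
        apply hjmem
        cases h1 : p.1 j <;> cases h2 : p.2 j <;> simp_all
    rw [this, mul_zero]

/-- Lemma 4.2(a): for every integer `−k ≤ j ≤ k`, the quantum integer
`[j] = (q^j − q^{−j})/(q − q⁻¹)` is an eigenvalue of `C`. -/
theorem Cop_has_eigenvalues (k : ℕ) (hk : 1 ≤ k) (q : ℂ) (hq0 : q ≠ 0)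
    (hq1 : q ≠ 1) (hq1' : q ≠ -1) :
    ∀ j : ℤ, -(k : ℤ) ≤ j → j ≤ (k : ℤ) →
      ∃ v : WW k, v ≠ 0 ∧
        Cop k q v = ((q ^ j - q ^ (-j)) / (q - q⁻¹)) • v := by
  have h21 : (q ^ 2 - 1 : ℂ) ≠ 0 := by
    intro h
    have hfac : (q - 1) * (q + 1) = 0 := by linear_combination h
    rcases mul_eq_zero.mp hfac with h' | h'
    · exact hq1 (by linear_combination h')
    · exact hq1' (by linear_combination h')
  have hD : q - q⁻¹ ≠ 0 := by
    intro h
    apply h21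
    have hq : q = q⁻¹ := sub_eq_zero.mp h
    have : q ^ 2 = q * q⁻¹ := by rw [sq]; nth_rewrite 2 [hq]; rfl
    rw [this, mul_inv_cancel₀ hq0]
    norm_num
  intro j hj1 hj2
  set s := j.natAbs with hsdef
  have hs : s ≤ k := by
    have habs : (s : ℤ) ≤ (k : ℤ) := by
      rw [hsdef, ← Int.abs_eq_natAbs]
      exact abs_le.mpr ⟨hj1, hj2⟩
    exact_mod_cast habs
  set ι : ℂ := if 0 ≤ j then 1 else -1 with hιdef
  set η : ℂ := ι * (-1) ^ (s + 1) with hηdef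
  have hX : ((-1 : ℂ) ^ (s + 1)) * ((-1 : ℂ) ^ (s + 1)) = 1 := by
    rw [← pow_add]
    exact Even.neg_one_pow ⟨s + 1, by ring⟩
  have hη : η * η = 1 := by
    rw [hηdef, hιdef]
    split_ifs <;> linear_combination hX
  refine ⟨vec k s q η, ?_, ?_⟩
  · intro h
    have h0 := congrFun h (fun _ => true, fun i : Fin k => decide (s ≤ (i : ℕ)))
    have hsupp : vecSupp k s (fun _ => true, fun i : Fin k => decide (s ≤ (i : ℕ))) := by
      constructor
      · intro i hi
        simp [Nat.not_le_of_lt hi]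
      · intro i hi
        simp [hi]
    rw [vec, if_pos hsupp] at h0
    simp only [Pi.zero_apply] at h0
    rw [Finset.prod_eq_one (fun i _ => by simp)] at h0
    exact one_ne_zero h0
  · rw [Cop_vec k s hs q η hq0 hD hη]
    have hscal : (-1 : ℂ) ^ (s + 1) * η * (q ^ (s : ℤ) - q ^ (-(s : ℤ))) / (q - q⁻¹)
        = (q ^ j - q ^ (-j)) / (q - q⁻¹) := by
      have hι : (-1 : ℂ) ^ (s + 1) * η = ι := by
        rw [hηdef]; linear_combination ι * hX
      rw [show (-1 : ℂ) ^ (s + 1) * η * (q ^ (s : ℤ) - q ^ (-(s : ℤ)))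
          = ((-1 : ℂ) ^ (s + 1) * η) * (q ^ (s : ℤ) - q ^ (-(s : ℤ))) by ring, hι]
      by_cases hj : 0 ≤ j
      · have hsj : (s : ℤ) = j := Int.natAbs_of_nonneg hj
        rw [hιdef, if_pos hj, hsj, one_mul]
      · have hsj : (s : ℤ) = -j := by
          rw [hsdef, ← Int.abs_eq_natAbs]
          exact abs_of_neg (lt_of_not_ge hj)
        rw [hιdef, if_neg hj, hsj, neg_neg]
        ring_nf
    rw [hscal]
end
end

section
/- Let N ≥ 1 and let A be a real symmetric (N+1)×(N+1) matrix, indexed by 0,…,N, with A_{ij} = 0 whenever |i−j| ≠ 1. Suppose λ ∈ ℝ and β ∈ ℝ^{N+1} satisfy A·β = λ·β with β_i ≠ 0 for every i. Then for every 0 ≤ i ≤ N−1: A_{i,i+1} = (λ/(β_i · β_{i+1})) · ∑_{s=0}^{i} (−1)^{i−s} β_s². In particular, all entries of A are completely determined by the single eigenvalue λ and its eigenvector β. (First part of the Technical Lemma in Section 4.5, Equation (17).) -/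
noncomputable section

/-- First part of the Technical Lemma in Section 4.5 (Equation (17)): a symmetric
tridiagonal matrix with zero diagonal is completely determined by one eigenvalue `λ`
and a corresponding nowhere-vanishing eigenvector `β`, via
`A_{i,i+1} = (λ/(β_i β_{i+1}))·∑_{s=0}^{i} (−1)^{i−s} β_s²`. -/
theorem tridiagonal_entries_from_eigenvector (N : ℕ) (hN : 1 ≤ N)
    (A : Matrix (Fin (N + 1)) (Fin (N + 1)) ℝ) (hsymm : A.IsSymm)
    (htri : ∀ i j : Fin (N + 1), |(i : ℤ) - (j : ℤ)| ≠ 1 → A i j = 0)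
    (lam : ℝ) (β : Fin (N + 1) → ℝ) (heig : A.mulVec β = lam • β)
    (hβ : ∀ i, β i ≠ 0) :
    ∀ i : ℕ, (hi : i < N) →
      A ⟨i, by omega⟩ ⟨i + 1, by omega⟩ =
        lam / (β ⟨i, by omega⟩ * β ⟨i + 1, by omega⟩) *
          ∑ s : Fin (i + 1), (-1 : ℝ) ^ (i - (s : ℕ)) *
            (β ⟨(s : ℕ), lt_of_lt_of_le s.isLt (by omega)⟩) ^ 2 := by
  have hrow : ∀ i : Fin (N + 1), ∑ j, A i j * β j = lam * β i := by
    intro i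
    have := congrFun heig i
    simpa [Matrix.mulVec, dotProduct] using this
  have habs : ∀ a b : ℤ, |a - b| ≠ 1 ↔ ¬(a - b = 1 ∨ a - b = -1) := by
    intro a b
    rw [ne_eq, abs_eq (by norm_num : (0:ℤ) ≤ 1)]
  -- main multiplied-out claim
  have main : ∀ k : ℕ, (hk : k < N) →
      A ⟨k, by omega⟩ ⟨k + 1, by omega⟩ * (β ⟨k, by omega⟩ * β ⟨k + 1, by omega⟩) =
        lam * ∑ s : Fin (k + 1), (-1 : ℝ) ^ (k - (s : ℕ)) *
            (β ⟨(s : ℕ), lt_of_lt_of_le s.isLt (by omega)⟩) ^ 2 := by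
    intro k
    induction k with
    | zero =>
      intro hk
      have h0 : ∑ j, A ⟨0, by omega⟩ j * β j =
          ∑ j ∈ ({⟨1, by omega⟩} : Finset (Fin (N + 1))), A ⟨0, by omega⟩ j * β j := by
        symm
        apply Finset.sum_subset (Finset.subset_univ _)
        intro j _ hj
        simp only [Finset.mem_singleton] at hj
        have hjv : (j : ℕ) ≠ 1 := by
          intro h; exact hj (Fin.ext h)
        have : A ⟨0, by omega⟩ j = 0 := by
          apply htri
          rw [habs]
          push_neg
          constructor <;> simp <;> omega
        exact mul_eq_zero_of_left this _
      have h1 := hrow ⟨0, by omega⟩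
      rw [h0, Finset.sum_singleton] at h1
      rw [Fin.sum_univ_one]
      simp only [Fin.isValue, Fin.val_zero, Nat.sub_zero, pow_zero, one_mul]
      linear_combination β ⟨0, by omega⟩ * h1
    | succ n ih =>
      intro hk
      have hn : n < N := by omega
      have hIH := ih hn
      -- row n+1
      have hne : (⟨n, by omega⟩ : Fin (N + 1)) ≠ ⟨n + 2, by omega⟩ := by
        intro h
        have := Fin.mk.injEq .. ▸ h
        omega
      have h0 : ∑ j, A ⟨n + 1, by omega⟩ j * β j =
          ∑ j ∈ ({⟨n, by omega⟩, ⟨n + 2, by omega⟩} : Finset (Fin (N + 1))),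
            A ⟨n + 1, by omega⟩ j * β j := by
        symm
        apply Finset.sum_subset (Finset.subset_univ _)
        intro j _ hj
        simp only [Finset.mem_insert, Finset.mem_singleton] at hj
        push_neg at hj
        have hj1 : (j : ℕ) ≠ n := fun h => hj.1 (Fin.ext h)
        have hj2 : (j : ℕ) ≠ n + 2 := fun h => hj.2 (Fin.ext h)
        have : A ⟨n + 1, by omega⟩ j = 0 := by
          apply htri
          rw [habs]
          push_neg
          constructor <;> simp <;> omega
        exact mul_eq_zero_of_left this _
      have h1 := hrow ⟨n + 1, by omega⟩
      rw [h0, Finset.sum_pair hne] at h1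
      have hsy : A ⟨n + 1, by omega⟩ ⟨n, by omega⟩ = A ⟨n, by omega⟩ ⟨n + 1, by omega⟩ :=
        hsymm.apply _ _
      rw [hsy] at h1
      -- sum recursion
      have hsum : ∑ s : Fin (n + 2), (-1 : ℝ) ^ (n + 1 - (s : ℕ)) *
            (β ⟨(s : ℕ), lt_of_lt_of_le s.isLt (by omega)⟩) ^ 2 =
          (β ⟨n + 1, by omega⟩) ^ 2 -
          ∑ s : Fin (n + 1), (-1 : ℝ) ^ (n - (s : ℕ)) *
            (β ⟨(s : ℕ), lt_of_lt_of_le s.isLt (by omega)⟩) ^ 2 := by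
        rw [Fin.sum_univ_castSucc]
        simp only [Fin.coe_castSucc, Fin.val_last, Nat.sub_self, pow_zero, one_mul]
        have : ∀ s : Fin (n + 1), (-1 : ℝ) ^ (n + 1 - (s : ℕ)) *
              (β ⟨(s : ℕ), lt_of_lt_of_le s.isLt (by omega)⟩) ^ 2 =
            -((-1 : ℝ) ^ (n - (s : ℕ)) *
              (β ⟨(s : ℕ), lt_of_lt_of_le s.isLt (by omega)⟩) ^ 2) := by
          intro s
          have hs : n + 1 - (s : ℕ) = (n - (s : ℕ)) + 1 := by omega
          rw [hs, pow_succ]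
          ring
        rw [Finset.sum_congr rfl (fun s _ => this s)]
        rw [Finset.sum_neg_distrib]
        ring
      rw [hsum]
      show A ⟨n + 1, by omega⟩ ⟨n + 2, by omega⟩ *
          (β ⟨n + 1, by omega⟩ * β ⟨n + 2, by omega⟩) = _
      linear_combination β ⟨n + 1, by omega⟩ * h1 - hIH
  intro i hi
  have h := main i hi
  have h1 : β ⟨i, by omega⟩ ≠ 0 := hβ _
  have h2 : β ⟨i + 1, by omega⟩ ≠ 0 := hβ _
  field_simp
  linear_combination h
end
end
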